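/- arXiv:2303.15032 — 7 statements merged into one kernel-verified Lean document; each statement's English description precedes it below -/
import Mathlib

section
/- Let d = gcd(n,m) and suppose d = 1. Then for every integer t ≥ t_0 one has the colon ideal equality (J_{n,m}^t : w_t) = (x_1, x_2, …, x_n), the maximal graded ideal of S. -/
open MvPolynomial

/-- The `m`-path ideal of the cycle graph of length `n`, as an ideal of
`S = K[x_0, …, x_{n-1}]` (variables indexed by `ZMod n`): it is generated by the
`n` monomials `x_i x_{i+1} ⋯ x_{i+m-1}`, indices taken modulo `n`. -/
noncomputable def cyclePathIdeal (K : Type*) [Field K] (n m : ℕ) :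
    Ideal (MvPolynomial (ZMod n) K) :=
  Ideal.span { p | ∃ i : ZMod n, p = ∏ j ∈ Finset.range m, X (i + (j : ZMod n)) }

/-- The maximal graded ideal `(x_0, …, x_{n-1})` of `K[x_i : i ∈ σ]`. -/
noncomputable def maxIdeal (K : Type*) [Field K] (σ : Type*) :
    Ideal (MvPolynomial σ K) :=
  Ideal.span (Set.range (X : σ → MvPolynomial σ K))

/-- The total degree of an exponent vector. -/
private def degE {σ : Type*} (d : σ →₀ ℕ) : ℕ := d.sum fun _ e => e

private lemma degE_add {σ : Type*} (d₁ d₂ : σ →₀ ℕ) : degE (d₁ + d₂) = degE d₁ + degE d₂ :=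
  Finsupp.sum_add_index' (fun _ => rfl) (fun _ _ _ => rfl)

private lemma degE_smul {σ : Type*} (c : ℕ) (d : σ →₀ ℕ) : degE (c • d) = c * degE d := by
  unfold degE
  rw [Finsupp.sum_smul_index (fun i => rfl), Finsupp.mul_sum]

private lemma degE_single {σ : Type*} (i : σ) : degE (Finsupp.single i (1:ℕ)) = 1 := by
  simp [degE, Finsupp.sum_single_index]

private lemma degE_sum {σ ι : Type*} (s : Finset ι) (f : ι → (σ →₀ ℕ)) :
    degE (∑ j ∈ s, f j) = ∑ j ∈ s, degE (f j) := by
  classical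
  induction s using Finset.cons_induction with
  | empty => simp [degE]
  | cons a s ha ih => rw [Finset.sum_cons, Finset.sum_cons, degE_add, ih]

private lemma degE_pos {σ : Type*} {d : σ →₀ ℕ} {i : σ} (h : d i ≠ 0) : 1 ≤ degE d := by
  have hi : i ∈ d.support := Finsupp.mem_support_iff.mpr h
  calc 1 ≤ d i := Nat.one_le_iff_ne_zero.mpr h
  _ ≤ ∑ j ∈ d.support, d j := Finset.single_le_sum (fun _ _ => Nat.zero_le _) hi
  _ = degE d := rfl

private lemma mem_maxIdeal_iff {K : Type*} [Field K] {σ : Type*} (f : MvPolynomial σ K) :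
    f ∈ maxIdeal K σ ↔ ∀ d ∈ f.support, d ≠ 0 := by
  rw [maxIdeal, ← Set.image_univ, mem_ideal_span_X_image]
  constructor
  · intro h d hd h0
    obtain ⟨i, -, hi⟩ := h d hd
    exact hi (by simp [h0])
  · intro h d hd
    obtain ⟨i, hi⟩ := Finsupp.ne_iff.mp (h d hd)
    exact ⟨i, Set.mem_univ i, by simpa using hi⟩

/-- Every exponent in the support of an element of `(maxIdeal)^k` has degree at least `k`. -/
private lemma degE_mem_pow_maxIdeal {K : Type*} [Field K] {σ : Type*} [DecidableEq σ] :
    ∀ (k : ℕ) (f : MvPolynomial σ K), f ∈ (maxIdeal K σ) ^ k →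
      ∀ d ∈ f.support, k ≤ degE d := by
  intro k
  induction k with
  | zero => intro f _ d _; exact Nat.zero_le _
  | succ k ih =>
    intro f hf
    rw [pow_succ] at hf
    refine Submodule.mul_induction_on hf ?_ ?_
    · intro p hp q hq d hd
      have := support_mul p q hd
      obtain ⟨d₁, hd₁, d₂, hd₂, rfl⟩ := Finset.mem_add.mp this
      have h1 : k ≤ degE d₁ := ih p hp d₁ hd₁
      have h2 : 1 ≤ degE d₂ := by
        have := (mem_maxIdeal_iff q).mp hq d₂ hd₂
        obtain ⟨i, hi⟩ := Finsupp.ne_iff.mp this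
        exact degE_pos (by simpa using hi)
      rw [degE_add]; omega
    · intro p q hp hq d hd
      have := MvPolynomial.support_add (p := p) (q := q) hd
      rcases Finset.mem_union.mp this with h | h
      · exact hp d h
      · exact hq d h

/-- A product of variables is a monomial. -/
private lemma prod_X_eq_monomial {K : Type*} [Field K] {σ : Type*} {ι : Type*}
    (s : Finset ι) (f : ι → σ) :
    (∏ j ∈ s, X (f j) : MvPolynomial σ K) =
      monomial (∑ j ∈ s, Finsupp.single (f j) 1) 1 := by
  classical
  induction s using Finset.cons_induction with
  | empty => simp [monomial_eq]
  | cons a s ha ih =>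
    rw [Finset.prod_cons, Finset.sum_cons, ih, X, monomial_mul, one_mul]

/-- Shift invariance of products over `ZMod n`. -/
private lemma prod_shift {M : Type*} [CommMonoid M] {n : ℕ} [NeZero n]
    (f : ZMod n → M) (k : ZMod n) :
    ∏ r ∈ Finset.range n, f (k + (r : ZMod n)) = ∏ i : ZMod n, f i := by
  refine Finset.prod_bij' (fun r _ => k + (r : ZMod n)) (fun b _ => (b - k).val)
    (fun r _ => Finset.mem_univ _) (fun b _ => Finset.mem_range.mpr (ZMod.val_lt _))
    (fun r hr => ?_) (fun b _ => ?_) (fun r _ => rfl)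
  · show ((k + (r : ZMod n)) - k).val = r
    have : ((k + (r : ZMod n)) - k) = (r : ZMod n) := by ring
    rw [this, ZMod.val_natCast_of_lt (Finset.mem_range.mp hr)]
  · show k + (((b - k).val : ℕ) : ZMod n) = b
    rw [ZMod.natCast_val, ZMod.cast_id]; ring

private lemma prod_cycle_pow {M : Type*} [CommMonoid M] {n : ℕ} [NeZero n]
    (f : ZMod n → M) (k : ZMod n) (c : ℕ) :
    ∏ q ∈ Finset.range (c * n), f (k + (q : ZMod n)) = (∏ i : ZMod n, f i) ^ c := by
  induction c with
  | zero => simp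
  | succ c ih =>
    have : (c + 1) * n = c * n + n := by ring
    rw [this, Finset.prod_range_add, ih, pow_succ]
    congr 1
    rw [← prod_shift f k]
    refine Finset.prod_congr rfl fun r hr => ?_
    congr 1
    push_cast
    simp [ZMod.natCast_self]

private lemma prod_double_range {M : Type*} [CommMonoid M] (F : ℕ → M) (a b : ℕ) :
    ∏ j ∈ Finset.range a, ∏ l ∈ Finset.range b, F (j * b + l)
      = ∏ q ∈ Finset.range (a * b), F q := by
  induction a with
  | zero => simp
  | succ a ih =>
    rw [Finset.prod_range_succ, ih, Nat.succ_mul, Finset.prod_range_add]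

/-- If `d = gcd(n,m) = 1`, then for every `t ≥ t₀` one has
`(J_{n,m}^t : w_t) = (x_1, …, x_n)`, where `w_t = (x_1⋯x_n)^α (x_1⋯x_m)^{t-t₀}`. -/
theorem colon_wt_eq_maxIdeal_of_gcd_eq_one
    (K : Type*) [Field K] (n m : ℕ) (hm : 2 ≤ m) (hmn : m < n)
    (hd : Nat.gcd n m = 1) (t0 α : ℕ) (hα : 0 < α) (ht0le : t0 ≤ n - 1)
    (ht0 : m * t0 = α * n + Nat.gcd n m)
    (ht0max : ∀ s : ℕ, s ≤ n - 1 → (∃ β : ℕ, 0 < β ∧ m * s = β * n + Nat.gcd n m) → s ≤ t0)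
    (t : ℕ) (ht : t0 ≤ t) :
    ((cyclePathIdeal K n m) ^ t).colon
      (Ideal.span {((∏ j ∈ Finset.range n, X ((j : ℕ) : ZMod n)) ^ α *
        (∏ j ∈ Finset.range m, X ((j : ℕ) : ZMod n)) ^ (t - t0) : MvPolynomial (ZMod n) K)})
      = maxIdeal K (ZMod n) := by
  haveI : NeZero n := ⟨by omega⟩
  rw [hd] at ht0
  set J := cyclePathIdeal K n m with hJ
  set P : MvPolynomial (ZMod n) K := ∏ j ∈ Finset.range n, X ((j : ℕ) : ZMod n) with hP
  set Q : MvPolynomial (ZMod n) K := ∏ j ∈ Finset.range m, X ((j : ℕ) : ZMod n) with hQ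
  set w : MvPolynomial (ZMod n) K := P ^ α * Q ^ (t - t0) with hw
  -- the generators
  set g : ZMod n → MvPolynomial (ZMod n) K :=
    fun i => ∏ j ∈ Finset.range m, X (i + (j : ZMod n)) with hg
  have hgJ : ∀ i, g i ∈ J := fun i => Ideal.subset_span ⟨i, rfl⟩
  have hQg : Q = g 0 := by
    rw [hQ, hg]
    exact Finset.prod_congr rfl fun j _ => by rw [zero_add]
  -- P as product over all of ZMod n
  have hPuniv : P = ∏ i : ZMod n, X i := by
    rw [hP, ← prod_shift (fun i => (X i : MvPolynomial (ZMod n) K)) 0]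
    exact Finset.prod_congr rfl fun r _ => by rw [zero_add]
  -- key combinatorial identity
  have key : ∀ k : ZMod n, X k * P ^ α = ∏ j ∈ Finset.range t0, g (k + ((j * m : ℕ) : ZMod n)) := by
    intro k
    have step1 : ∀ j ∈ Finset.range t0, g (k + ((j * m : ℕ) : ZMod n))
        = ∏ l ∈ Finset.range m, X (k + ((j * m + l : ℕ) : ZMod n)) := by
      intro j _
      refine Finset.prod_congr rfl fun l _ => ?_
      congr 1
      push_cast
      ring
    rw [Finset.prod_congr rfl step1, prod_double_range
      (fun q => (X (k + (q : ZMod n)) : MvPolynomial (ZMod n) K)) t0 m]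
    have htm : t0 * m = α * n + 1 := by rw [mul_comm]; exact ht0
    rw [htm, Finset.prod_range_succ, prod_cycle_pow (fun i => (X i : MvPolynomial (ZMod n) K)) k α]
    have : k + ((α * n : ℕ) : ZMod n) = k := by
      push_cast
      simp [ZMod.natCast_self]
    rw [this, hPuniv, mul_comm]
  -- maxIdeal ≤ colon
  have dir1 : maxIdeal K (ZMod n) ≤ (J ^ t).colon (Ideal.span {w}) := by
    rw [maxIdeal, Ideal.span_le]
    rintro - ⟨k, rfl⟩
    rw [SetLike.mem_coe, Ideal.mem_colon_span_singleton]
    have : X k * w = (∏ j ∈ Finset.range t0, g (k + ((j * m : ℕ) : ZMod n))) * Q ^ (t - t0) := by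
      rw [hw, ← mul_assoc, key k]
    rw [this]
    have h1 : (∏ j ∈ Finset.range t0, g (k + ((j * m : ℕ) : ZMod n))) ∈ J ^ t0 := by
      have := Ideal.prod_mem_prod (s := Finset.range t0) (I := fun _ : ℕ => J)
        (x := fun j => g (k + ((j * m : ℕ) : ZMod n))) (fun j _ => hgJ _)
      simpa using this
    have h2 : Q ^ (t - t0) ∈ J ^ (t - t0) := by
      rw [hQg]; exact Ideal.pow_mem_pow (hgJ 0) _
    have := Ideal.mul_mem_mul h1 h2
    rwa [← pow_add, Nat.add_sub_cancel' ht] at this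
  -- w as a monomial and its degree
  set eP : ZMod n →₀ ℕ := ∑ j ∈ Finset.range n, Finsupp.single ((j : ℕ) : ZMod n) 1 with heP
  set eQ : ZMod n →₀ ℕ := ∑ j ∈ Finset.range m, Finsupp.single ((j : ℕ) : ZMod n) 1 with heQ
  have hwmon : w = monomial (α • eP + (t - t0) • eQ) 1 := by
    rw [hw, hP, hQ, prod_X_eq_monomial, prod_X_eq_monomial, monomial_pow, monomial_pow,
      monomial_mul]
    norm_num
    rfl
  have hdegP : degE eP = n := by
    rw [heP, degE_sum]
    simp [degE_single]
  have hdegQ : degE eQ = m := by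
    rw [heQ, degE_sum]
    simp [degE_single]
  have hdeg : degE (α • eP + (t - t0) • eQ) = α * n + (t - t0) * m := by
    rw [degE_add, degE_smul, degE_smul, hdegP, hdegQ]
  -- J ≤ maxIdeal ^ m
  have hJle : J ≤ (maxIdeal K (ZMod n)) ^ m := by
    rw [hJ, cyclePathIdeal, Ideal.span_le]
    rintro - ⟨i, rfl⟩
    have := Ideal.prod_mem_prod (s := Finset.range m) (I := fun _ : ℕ => maxIdeal K (ZMod n))
      (x := fun j => (X (i + (j : ZMod n)) : MvPolynomial (ZMod n) K))
      (fun j _ => Ideal.subset_span ⟨_, rfl⟩)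
    simpa using this
  -- w ∉ J ^ t
  have hwnot : w ∉ J ^ t := by
    intro hmem
    have hmem2 : w ∈ (maxIdeal K (ZMod n)) ^ (m * t) := by
      have := Ideal.pow_right_mono hJle t hmem
      rwa [← pow_mul] at this
    have hsup : (α • eP + (t - t0) • eQ) ∈ w.support := by
      classical
      rw [hwmon, support_monomial]
      simp
    have hge := degE_mem_pow_maxIdeal (m * t) w hmem2 _ hsup
    rw [hdeg] at hge
    have hmt : m * t = m * t0 + m * (t - t0) := by
      rw [← Nat.mul_add, Nat.add_sub_cancel' ht]
    rw [mul_comm (t - t0) m] at hge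
    omega
  refine le_antisymm ?_ dir1
  intro f hf
  by_contra hfm
  have h0 : (0 : ZMod n →₀ ℕ) ∈ f.support := by
    by_contra h0
    exact hfm ((mem_maxIdeal_iff f).mpr fun d hd hd0 => h0 (hd0 ▸ hd))
  have hc : coeff 0 f ≠ 0 := mem_support_iff.mp h0
  have hsub : f - C (coeff 0 f) ∈ maxIdeal K (ZMod n) := by
    rw [mem_maxIdeal_iff]
    intro d hd hd0
    subst hd0
    have : coeff 0 (f - C (coeff 0 f)) = 0 := by
      rw [coeff_sub, coeff_zero_C, sub_self]
    exact mem_support_iff.mp hd this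
  have hCc : C (coeff 0 f) ∈ (J ^ t).colon (Ideal.span {w}) := by
    have heq : C (coeff 0 f) = f - (f - C (coeff 0 f)) := by ring
    rw [heq]
    exact Ideal.sub_mem _ hf (dir1 hsub)
  rw [Ideal.mem_colon_span_singleton] at hCc
  apply hwnot
  have := Ideal.mul_mem_left _ (C ((coeff 0 f)⁻¹)) hCc
  rwa [← mul_assoc, ← C_mul, inv_mul_cancel₀ hc, C_1, one_mul] at this
end

section
/- Let d = gcd(n,m) and suppose d > 1. Then for every integer t ≥ t_0 one has the colon ideal equality (J_{n,m}^t : w_t) = U_{n,d}. -/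
open MvPolynomial

namespace CWTaux

open Finset

variable {K : Type*} [Field K]

/-- exponent vector of the path monomial starting at `i` of length `m`. -/
noncomputable def gen (n m : ℕ) (i : ZMod n) : ZMod n →₀ ℕ :=
  ∑ j ∈ Finset.range m, Finsupp.single (i + (j : ZMod n)) 1

lemma prod_X_eq_monomial (n m : ℕ) (i : ZMod n) :
    (∏ j ∈ Finset.range m, X (i + (j : ZMod n)) : MvPolynomial (ZMod n) K)
      = monomial (gen n m i) 1 := by
  classical
  induction m with
  | zero => simp [gen]
  | succ m ih =>
      have hX : (X (i + (m:ZMod n)) : MvPolynomial (ZMod n) K)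
          = monomial (Finsupp.single (i + (m:ZMod n)) 1) 1 := rfl
      rw [Finset.prod_range_succ, ih,
        show gen n (m+1) i = gen n m i + Finsupp.single (i + (m:ZMod n)) 1 from
          Finset.sum_range_succ _ m, hX, monomial_mul, mul_one]

lemma gen_apply {n : ℕ} [NeZero n] (m : ℕ) (hm : m ≤ n) (i v : ZMod n) :
    gen n m i v = if (v - i).val < m then 1 else 0 := by
  classical
  rw [gen, Finsupp.finset_sum_apply]
  have key : ∀ j ∈ Finset.range m, (Finsupp.single (i + (j:ZMod n)) 1 : ZMod n →₀ ℕ) v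
      = if j = (v - i).val then 1 else 0 := by
    intro j hj
    rw [Finsupp.single_apply]
    congr 1
    simp only [eq_iff_iff]
    constructor
    · rintro rfl
      have : ((j : ZMod n)) = (i + j) - i := by ring
      rw [show (i + (j:ZMod n)) - i = (j:ZMod n) by ring, ZMod.val_natCast,
        Nat.mod_eq_of_lt (lt_of_lt_of_le (Finset.mem_range.mp hj) hm)]
    · intro h
      have : (j : ZMod n) = v - i := by
        rw [h, ZMod.natCast_val, ZMod.cast_id]
      rw [this]; ring
  rw [Finset.sum_congr rfl key]
  simp [Finset.sum_ite_eq' (Finset.range m)]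

/-- exponent vectors of products of `t` path monomials -/
def genSums (n m t : ℕ) : Set (ZMod n →₀ ℕ) :=
  {e | ∃ M : Multiset (ZMod n), Multiset.card M = t ∧ e = (M.map (gen n m)).sum}

lemma span_monomial_pow (n m t : ℕ) :
    (Ideal.span ((fun e => monomial e (1:K)) '' Set.range (gen n m)))^t
      = Ideal.span ((fun e => monomial e (1:K)) '' genSums n m t) := by
  classical
  induction t with
  | zero =>
      rw [pow_zero, Ideal.one_eq_top]
      have h0 : genSums n m 0 = {0} := by
        ext e
        constructor
        · rintro ⟨M, hM, rfl⟩
          rw [Multiset.card_eq_zero] at hM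
          simp [hM]
        · rintro rfl
          exact ⟨0, by simp⟩
      rw [h0]
      have : ((fun e => monomial e (1:K)) '' ({0} : Set (ZMod n →₀ ℕ)))
          = ({1} : Set (MvPolynomial (ZMod n) K)) := by
        ext p; simp [MvPolynomial.monomial_zero']
      rw [this, Ideal.span_singleton_one]
  | succ t ih =>
      rw [pow_succ, ih, Ideal.span_mul_span']
      congr 1
      ext p
      constructor
      · rintro ⟨a, ha, b, hb, rfl⟩
        obtain ⟨ea, ⟨Ma, hMa, rfl⟩, rfl⟩ := ha
        obtain ⟨eb, ⟨i, rfl⟩, rfl⟩ := hb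
        refine ⟨(Multiset.map (gen n m) (i ::ₘ Ma)).sum, ⟨i ::ₘ Ma, by simp [hMa], rfl⟩, ?_⟩
        simp only [Multiset.map_cons, Multiset.sum_cons]
        rw [monomial_mul, mul_one, add_comm]
      · rintro ⟨e, ⟨M, hM, rfl⟩, rfl⟩
        have hpos : 0 < Multiset.card M := by rw [hM]; omega
        obtain ⟨i, hi⟩ := Multiset.card_pos_iff_exists_mem.mp hpos
        obtain ⟨M', rfl⟩ : ∃ M', M = i ::ₘ M' := ⟨M.erase i, (Multiset.cons_erase hi).symm⟩
        refine ⟨monomial ((M'.map (gen n m)).sum) 1, ⟨_, ⟨M', ?_, rfl⟩, rfl⟩,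
          monomial (gen n m i) 1, ⟨_, ⟨i, rfl⟩, rfl⟩, ?_⟩
        · simpa using hM
        · simp only [Multiset.map_cons, Multiset.sum_cons]
          rw [monomial_mul, mul_one, add_comm]

lemma cyclePathIdeal_eq (n m : ℕ) :
    cyclePathIdeal K n m
      = Ideal.span ((fun e => monomial e (1:K)) '' Set.range (gen n m)) := by
  unfold cyclePathIdeal
  congr 1
  ext p
  constructor
  · rintro ⟨i, rfl⟩
    exact ⟨gen n m i, ⟨i, rfl⟩, (prod_X_eq_monomial n m i (K := K)).symm⟩
  · rintro ⟨e, ⟨i, rfl⟩, rfl⟩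
    exact ⟨i, (prod_X_eq_monomial n m i (K := K)).symm⟩


lemma support_mul_monomial (n : ℕ) (W : ZMod n →₀ ℕ) (p : MvPolynomial (ZMod n) K) (e : ZMod n →₀ ℕ) :
    e ∈ (p * monomial W 1).support ↔ W ≤ e ∧ (e - W) ∈ p.support := by
  classical
  rw [MvPolynomial.mem_support_iff, MvPolynomial.coeff_mul_monomial']
  by_cases h : W ≤ e
  · simp [h, MvPolynomial.mem_support_iff]
  · simp [h]

lemma mem_colon_span_monomial (n : ℕ) (S : Set (ZMod n →₀ ℕ)) (W : ZMod n →₀ ℕ)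
    (p : MvPolynomial (ZMod n) K) :
    p ∈ (Ideal.span ((fun e => monomial e (1:K)) '' S)).colon (Ideal.span {monomial W (1:K)})
      ↔ ∀ e ∈ p.support, ∃ s ∈ S, s ≤ e + W := by
  classical
  rw [Ideal.mem_colon_span_singleton, mem_ideal_span_monomial_image]
  constructor
  · intro h e he
    exact h (e + W) ((support_mul_monomial n W p (e + W)).mpr
      ⟨le_add_self, by simpa [add_tsub_cancel_right] using he⟩)
  · intro h e he
    obtain ⟨hWe, he'⟩ := (support_mul_monomial n W p e).mp he
    obtain ⟨s, hs, hle⟩ := h (e - W) he'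
    exact ⟨s, hs, hle.trans (by rw [tsub_add_cancel_of_le hWe])⟩

lemma mem_inf_span_X (n d : ℕ) (p : MvPolynomial (ZMod n) K) :
    (p ∈ ⨅ j ∈ Finset.range d,
        Ideal.span { q : MvPolynomial (ZMod n) K |
          ∃ k : ZMod n, k.val % d = j ∧ q = X k })
      ↔ ∀ e ∈ p.support, ∀ j < d, ∃ k : ZMod n, k.val % d = j ∧ e k ≠ 0 := by
  classical
  have hset : ∀ j, { q : MvPolynomial (ZMod n) K | ∃ k : ZMod n, k.val % d = j ∧ q = X k }
      = X '' {k : ZMod n | k.val % d = j} := by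
    intro j
    ext q
    constructor
    · rintro ⟨k, hk, rfl⟩; exact ⟨k, hk, rfl⟩
    · rintro ⟨k, hk, rfl⟩; exact ⟨k, hk, rfl⟩
  simp only [hset, Ideal.mem_iInf, Finset.mem_range]
  constructor
  · intro h e he j hj
    obtain ⟨k, hk, hk2⟩ := (mem_ideal_span_X_image.mp (by
      simpa using h j hj : p ∈ Ideal.span (X '' {k : ZMod n | k.val % d = j}))) e he
    exact ⟨k, hk, hk2⟩
  · intro h j
    intro hj
    rw [mem_ideal_span_X_image]
    intro e he
    obtain ⟨k, hk, hk2⟩ := h e he j hj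
    exact ⟨k, hk, hk2⟩


lemma card_filter_mod (d a L : ℕ) (ha : a < d) (hL : d ∣ L) :
    ((Finset.range L).filter (fun l => l % d = a)).card = L / d := by
  classical
  have hd : 0 < d := lt_of_le_of_lt (Nat.zero_le a) ha
  rw [← Finset.card_range (L / d)]
  apply Finset.card_bij' (fun l _ => l / d) (fun i _ => a + i * d)
  · intro l hl
    simp only [Finset.mem_filter, Finset.mem_range] at hl
    exact Finset.mem_range.mpr (Nat.div_lt_div_of_lt_of_dvd hL hl.1)
  · intro i hi
    simp only [Finset.mem_range] at hi
    simp only [Finset.mem_filter, Finset.mem_range]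
    constructor
    · obtain ⟨q, rfl⟩ := hL
      have : i + 1 ≤ q := by
        have := hi
        rwa [Nat.mul_div_cancel_left q hd] at this
      calc a + i * d < d + i * d := by omega
        _ ≤ d * q := by nlinarith
    · simp [Nat.add_mul_mod_self_right, Nat.mod_eq_of_lt ha]
  · intro l hl
    simp only [Finset.mem_filter, Finset.mem_range] at hl
    conv_lhs => rw [← hl.2]
    exact Nat.mod_add_div' l d
  · intro i hi
    rw [Nat.add_mul_div_right _ _ hd, Nat.div_eq_of_lt ha, zero_add]

lemma mod_shift_iff (d : ℕ) [NeZero d] (c j l : ℕ) (hj : j < d) :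
    (c + l) % d = j ↔ l % d = ((j : ZMod d) - (c : ZMod d)).val := by
  constructor
  · intro h
    have h1 : (((c + l) % d : ℕ) : ZMod d) = (j : ZMod d) := by rw [h]
    rw [ZMod.natCast_mod] at h1
    push_cast at h1
    have h2 : (l : ZMod d) = (j : ZMod d) - (c : ZMod d) := by
      rw [← h1]; ring
    rw [← h2, ZMod.val_natCast]
  · intro h
    have h2 : (l : ZMod d) = (j : ZMod d) - (c : ZMod d) := by
      have := ZMod.natCast_rightInverse (n := d) ((j : ZMod d) - (c : ZMod d))
      rw [← this, ← h, ZMod.natCast_mod]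
    have : (((c + l : ℕ)) : ZMod d) = (j : ZMod d) := by
      push_cast [h2]; ring
    calc (c + l) % d = (((c + l : ℕ)) : ZMod d).val := (ZMod.val_natCast _ _).symm
      _ = (j : ZMod d).val := by rw [this]
      _ = j := by rw [ZMod.val_natCast, Nat.mod_eq_of_lt hj]

/-- the finset of variables in residue class `j` mod `d` -/
def classSet (n d j : ℕ) [NeZero n] : Finset (ZMod n) :=
  Finset.univ.filter (fun v => v.val % d = j)

lemma sum_class_gen {n : ℕ} [NeZero n] {d : ℕ} (m : ℕ) (hm : m ≤ n) (hd : 1 < d)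
    (hdn : d ∣ n) (hdm : d ∣ m) (j : ℕ) (hj : j < d) (u : ZMod n) :
    ∑ v ∈ classSet n d j, gen n m u v = m / d := by
  classical
  haveI : NeZero d := ⟨by omega⟩
  have hsum : ∑ v ∈ classSet n d j, gen n m u v
      = ((classSet n d j).filter (fun v => (v - u).val < m)).card := by
    rw [Finset.card_filter]
    apply Finset.sum_congr rfl
    intro v hv
    rw [gen_apply m hm]
  rw [hsum, ← card_filter_mod d (((j : ZMod d) - (u.val : ZMod d)).val) m (ZMod.val_lt _) hdm]
  apply Finset.card_bij' (fun v _ => (v - u).val) (fun l _ => u + (l : ZMod n))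
  · intro v hv
    simp only [classSet, Finset.mem_filter, Finset.mem_univ, true_and] at hv
    simp only [Finset.mem_filter, Finset.mem_range]
    refine ⟨hv.2, ?_⟩
    rw [← mod_shift_iff d u.val j _ hj]
    have hv' : v = u + (v - u) := by ring
    have h1 : v.val = (u.val + (v - u).val) % n := by
      conv_lhs => rw [hv']
      exact ZMod.val_add _ _
    rw [← Nat.mod_mod_of_dvd _ hdn, ← h1]
    exact hv.1
  · intro l hl
    simp only [Finset.mem_filter, Finset.mem_range] at hl
    have hlm : l % d = _ := hl.2
    rw [← mod_shift_iff d u.val j l hj] at hlm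
    simp only [classSet, Finset.mem_filter, Finset.mem_univ, true_and]
    have hval : (u + (l : ZMod n)) - u = (l : ZMod n) := by ring
    constructor
    · have h2 : (u + (l : ZMod n)).val = (u.val + l % n) % n := by
        rw [ZMod.val_add, ZMod.val_natCast]
      rw [h2, Nat.mod_mod_of_dvd _ hdn, Nat.mod_eq_of_lt (lt_of_lt_of_le hl.1 hm)]
      exact hlm
    · rw [hval, ZMod.val_natCast, Nat.mod_eq_of_lt (lt_of_lt_of_le hl.1 hm)]
      exact hl.1
  · intro v hv
    have : (v - u : ZMod n) = ((v - u).val : ZMod n) := (ZMod.natCast_rightInverse _).symm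
    rw [← this]; ring
  · intro l hl
    simp only [Finset.mem_filter, Finset.mem_range] at hl
    have hval : (u + (l : ZMod n)) - u = (l : ZMod n) := by ring
    rw [hval, ZMod.val_natCast, Nat.mod_eq_of_lt (lt_of_lt_of_le hl.1 hm)]

lemma card_classSet {n : ℕ} [NeZero n] {d : ℕ} (hd : 1 < d) (hdn : d ∣ n)
    (j : ℕ) (hj : j < d) : (classSet n d j).card = n / d := by
  classical
  haveI : NeZero d := ⟨by omega⟩
  have := sum_class_gen (n := n) (d := d) n le_rfl hd hdn hdn j hj 0
  rw [← this, Finset.card_eq_sum_ones]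
  apply Finset.sum_congr rfl
  intro v hv
  rw [gen_apply n le_rfl]
  simp [ZMod.val_lt]


lemma multiset_sum_comm {β γ : Type*} (C : Finset β) (M : Multiset γ) (f : γ → β → ℕ) :
    ∑ v ∈ C, (M.map (fun u => f u v)).sum = (M.map (fun u => ∑ v ∈ C, f u v)).sum := by
  induction M using Multiset.induction with
  | empty => simp
  | cons a M ih => simp [Finset.sum_add_distrib, ih]

lemma finsupp_multiset_sum_apply {n : ℕ} (M : Multiset (ZMod n →₀ ℕ)) (v : ZMod n) :
    (M.sum) v = (M.map (fun g => g v)).sum := by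
  induction M using Multiset.induction with
  | empty => simp
  | cons a M ih => simp [ih]

lemma core_forward {n m d : ℕ} [NeZero n] (hmn : m ≤ n) (hd : 1 < d)
    (hdn : d ∣ n) (hdm : d ∣ m) (t0 α t : ℕ) (ht0 : m * t0 = α * n + d) (ht : t0 ≤ t)
    (e : ZMod n →₀ ℕ)
    (h : ∃ s ∈ genSums n m t, s ≤ e + (α • gen n n 0 + (t - t0) • gen n m 0)) :
    ∀ j < d, ∃ k : ZMod n, k.val % d = j ∧ e k ≠ 0 := by
  classical
  intro j hj
  by_contra h0
  push_neg at h0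
  obtain ⟨s, ⟨M, hM, rfl⟩, hle⟩ := h
  set C := classSet n d j with hC
  -- left sum
  have hL : ∑ v ∈ C, ((M.map (gen n m)).sum) v = t * (m / d) := by
    have h1 : ∀ v, ((M.map (gen n m)).sum) v = (M.map (fun u => gen n m u v)).sum := by
      intro v
      rw [finsupp_multiset_sum_apply, Multiset.map_map]
      rfl
    calc ∑ v ∈ C, ((M.map (gen n m)).sum) v
        = ∑ v ∈ C, (M.map (fun u => gen n m u v)).sum := by
          exact Finset.sum_congr rfl fun v _ => h1 v
      _ = (M.map (fun u => ∑ v ∈ C, gen n m u v)).sum := multiset_sum_comm C M _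
      _ = (M.map (fun _ => m / d)).sum := by
          congr 1
          apply Multiset.map_congr rfl
          intro u _
          exact sum_class_gen m hmn hd hdn hdm j hj u
      _ = t * (m / d) := by
          rw [Multiset.map_const', Multiset.sum_replicate, hM, smul_eq_mul]
  -- right sum
  have hR : ∑ v ∈ C, (e + (α • gen n n 0 + (t - t0) • gen n m 0)) v
      = α * (n / d) + (t - t0) * (m / d) := by
    have he0 : ∀ v ∈ C, e v = 0 := by
      intro v hv
      simp only [hC, classSet, Finset.mem_filter, Finset.mem_univ, true_and] at hv
      by_contra hne
      exact hne (h0 v hv)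
    have : ∀ v ∈ C, (e + (α • gen n n 0 + (t - t0) • gen n m 0)) v
        = α * gen n n 0 v + (t - t0) * gen n m 0 v := by
      intro v hv
      simp [he0 v hv]
    rw [Finset.sum_congr rfl this, Finset.sum_add_distrib, ← Finset.mul_sum, ← Finset.mul_sum,
      sum_class_gen n le_rfl hd hdn hdn j hj 0, sum_class_gen m hmn hd hdn hdm j hj 0]
  have hsum : ∑ v ∈ C, ((M.map (gen n m)).sum) v
      ≤ ∑ v ∈ C, (e + (α • gen n n 0 + (t - t0) • gen n m 0)) v :=
    Finset.sum_le_sum fun v _ => hle v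
  rw [hL, hR] at hsum
  -- arithmetic contradiction
  have hde : 0 < d := by omega
  have htm : t * (m / d) = t0 * (m / d) + (t - t0) * (m / d) := by
    rw [← Nat.add_mul]; congr 1; omega
  have h2 : t0 * (m / d) ≤ α * (n / d) := by
    rw [htm] at hsum
    omega
  have h3 : t0 * (m / d) * d ≤ α * (n / d) * d := Nat.mul_le_mul_right d h2
  rw [mul_assoc, mul_assoc, Nat.div_mul_cancel hdm, Nat.div_mul_cancel hdn] at h3
  have : m * t0 ≤ α * n := by rw [mul_comm m t0]; exact h3
  rw [ht0] at this
  omega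


lemma sum_fin_lt (r c : ℕ) (hc : c ≤ r) :
    ∑ i : Fin r, (if i.val < c then (1:ℕ) else 0) = c := by
  classical
  rw [Fin.sum_univ_eq_sum_range (fun l => if l < c then (1:ℕ) else 0) r]
  rw [← Finset.sum_subset (Finset.range_subset_range.mpr hc)
    (fun x _ hx => if_neg (by simpa using hx))]
  rw [Finset.sum_congr rfl (fun x hx => if_pos (Finset.mem_range.mp hx))]
  simp

lemma sum_fin_eq_zero (r : ℕ) (hr : 0 < r) :
    ∑ i : Fin r, (if i.val = 0 then (1:ℕ) else 0) = 1 := by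
  classical
  rw [Fin.sum_univ_eq_sum_range (fun l => if l = 0 then (1:ℕ) else 0) r]
  rw [Finset.sum_ite_eq' (Finset.range r) 0 (fun _ => (1:ℕ))]
  simp [Finset.mem_range, hr]

lemma sum_mul_gen_eq {n : ℕ} [NeZero n] (m : ℕ) (hm : m ≤ n) (sf : ZMod n → ℕ) (v : ZMod n) :
    ∑ u : ZMod n, sf u * gen n m u v = ∑ l ∈ Finset.range m, sf (v - (l : ZMod n)) := by
  classical
  have h1 : ∀ u : ZMod n, sf u * gen n m u v = if (v - u).val < m then sf u else 0 := by
    intro u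
    rw [gen_apply m hm]
    by_cases h : (v - u).val < m <;> simp [h]
  rw [Finset.sum_congr rfl (fun u _ => h1 u), ← Finset.sum_filter]
  apply Finset.sum_bij' (fun (u : ZMod n) _ => (v - u).val) (fun l _ => v - (l : ZMod n))
  · intro u hu
    simp only [Finset.mem_filter, Finset.mem_univ, true_and] at hu
    exact Finset.mem_range.mpr hu
  · intro l hl
    simp only [Finset.mem_filter, Finset.mem_univ, true_and]
    have : v - (v - (l : ZMod n)) = (l : ZMod n) := by ring
    rw [this, ZMod.val_natCast,
      Nat.mod_eq_of_lt (lt_of_lt_of_le (Finset.mem_range.mp hl) hm)]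
    exact Finset.mem_range.mp hl
  · intro u hu
    have : (v - u : ZMod n) = (((v - u).val : ℕ) : ZMod n) :=
      (ZMod.natCast_rightInverse _).symm
    rw [← this]; ring
  · intro l hl
    have : v - (v - (l : ZMod n)) = (l : ZMod n) := by ring
    rw [this, ZMod.val_natCast,
      Nat.mod_eq_of_lt (lt_of_lt_of_le (Finset.mem_range.mp hl) hm)]
  · intro u hu
    congr 1
    have : (v - u : ZMod n) = (((v - u).val : ℕ) : ZMod n) :=
      (ZMod.natCast_rightInverse _).symm
    rw [← this]; ring


lemma core_backward {n m d : ℕ} [NeZero n] (hm2 : 2 ≤ m) (hmn : m < n) (hd : 1 < d)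
    (hdn : d ∣ n) (hdm : d ∣ m) (hcop : Nat.Coprime (m / d) (n / d))
    (t0 α t : ℕ) (hα : 0 < α) (ht0 : m * t0 = α * n + d)
    (ht0max : ∀ s : ℕ, s ≤ n - 1 → (∃ β : ℕ, 0 < β ∧ m * s = β * n + d) → s ≤ t0)
    (ht : t0 ≤ t) (e : ZMod n →₀ ℕ)
    (hK : ∀ j < d, ∃ k : ZMod n, k.val % d = j ∧ e k ≠ 0) :
    ∃ s ∈ genSums n m t, s ≤ e + (α • gen n n 0 + (t - t0) • gen n m 0) := by
  classical
  haveI hdinst : NeZero d := ⟨by omega⟩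
  have hn0 : 0 < n := Nat.pos_of_ne_zero (NeZero.ne n)
  have hd0 : 0 < d := by omega
  set r := n / d with hrdef
  set m' := m / d with hm'def
  have hnrd : n = d * r := (Nat.div_mul_cancel hdn).symm.trans (mul_comm _ _)
  have hmd : m = d * m' := (Nat.div_mul_cancel hdm).symm.trans (mul_comm _ _)
  have hr0 : 0 < r := by
    rcases Nat.eq_zero_or_pos r with h | h
    · rw [h, mul_zero] at hnrd; omega
    · exact h
  have hm'0 : 0 < m' := by
    rcases Nat.eq_zero_or_pos m' with h | h
    · rw [h, mul_zero] at hmd; omega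
    · exact h
  have hrm : n ∣ r * m := ⟨m', by rw [hnrd, hmd]; ring⟩
  -- choose representatives
  have hK' : ∀ j : ZMod d, ∃ k : ZMod n, k.val % d = j.val ∧ e k ≠ 0 :=
    fun j => hK j.val (ZMod.val_lt j)
  choose κ hκcl hκne using hK'
  -- the parametrization
  set Φ : ZMod d × Fin r → ZMod n :=
    fun p => κ p.1 + ((p.2.val * m : ℕ) : ZMod n) with hΦdef
  have hclassmul : ∀ (x : ZMod n) (a : ℕ), (x + ((a * m : ℕ) : ZMod n)).val % d = x.val % d := by
    intro x a
    have h1 : (x + ((a * m : ℕ) : ZMod n)).val = (x.val + (a * m) % n) % n := by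
      rw [ZMod.val_add, ZMod.val_natCast]
    have h2 : (a * m) % n % d = 0 := by
      rw [Nat.mod_mod_of_dvd _ hdn]
      obtain ⟨c, hc⟩ := hdm.mul_left a
      rw [hc, Nat.mul_mod_right]
    rw [h1, Nat.mod_mod_of_dvd _ hdn, Nat.add_mod, h2, add_zero, Nat.mod_mod_of_dvd _ dvd_rfl]
  have hΦclass : ∀ p : ZMod d × Fin r, (Φ p).val % d = p.1.val := by
    intro p
    rw [hΦdef]
    simp only
    rw [hclassmul (κ p.1) p.2.val, hκcl]
  have hmulinj : ∀ i i' : Fin r, ((i.val * m : ℕ) : ZMod n) = ((i'.val * m : ℕ) : ZMod n) → i = i' := by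
    intro i i' h
    have hmeq : i.val * m ≡ i'.val * m [MOD n] := (ZMod.natCast_eq_natCast_iff _ _ _).mp h
    have h2 : m' * i.val ≡ m' * i'.val [MOD r] := by
      apply Nat.ModEq.mul_left_cancel' (c := d) (by omega)
      have e1 : d * (m' * i.val) = i.val * m := by rw [hmd]; ring
      have e2 : d * (m' * i'.val) = i'.val * m := by rw [hmd]; ring
      rw [e1, e2, ← hnrd]
      exact hmeq
    have h3 : i.val ≡ i'.val [MOD r] := Nat.ModEq.cancel_left_of_coprime hcop.symm h2
    have h4 : i.val % r = i'.val % r := h3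
    rw [Nat.mod_eq_of_lt i.isLt, Nat.mod_eq_of_lt i'.isLt] at h4
    exact Fin.ext h4
  have hΦinj : Function.Injective Φ := by
    intro p q hpq
    have h1 : p.1 = q.1 := by
      apply ZMod.val_injective d
      rw [← hΦclass p, hpq, hΦclass q]
    have h2 : ((p.2.val * m : ℕ) : ZMod n) = ((q.2.val * m : ℕ) : ZMod n) := by
      rw [hΦdef] at hpq
      simp only at hpq
      rw [h1] at hpq
      exact add_left_cancel hpq
    have h3 : p.2 = q.2 := hmulinj _ _ h2
    exact Prod.ext h1 h3
  have hΦbij : Function.Bijective Φ := by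
    rw [Fintype.bijective_iff_injective_and_card]
    refine ⟨hΦinj, ?_⟩
    rw [Fintype.card_prod, ZMod.card d, Fintype.card_fin, ZMod.card n, hnrd]
  set E := Equiv.ofBijective Φ hΦbij with hEdef
  have hEapp : ∀ p, E p = Φ p := fun p => rfl
  have hEsymm : ∀ p, E.symm (Φ p) = p := by
    intro p
    rw [← hEapp]
    exact Equiv.symm_apply_apply E p
  have hEv : ∀ v : ZMod n, Φ (E.symm v) = v := fun v => E.apply_symm_apply v
  -- istar
  have hclass1 : ∀ x : ZMod n, (x + 1).val % d = (x.val + 1) % d := by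
    intro x
    have h1 : (x + 1).val = (x.val + 1 % n) % n := by
      rw [ZMod.val_add, ZMod.val_one_eq_one_mod]
    rw [h1, Nat.mod_eq_of_lt (by omega : 1 < n), Nat.mod_mod_of_dvd _ hdn]
  have hsur : ∀ j : ZMod d, ∃ i : Fin r, Φ (j, i) = κ (j - 1) + 1 := by
    intro j
    obtain ⟨p, hp⟩ : ∃ p, Φ p = κ (j - 1) + 1 := ⟨E.symm (κ (j - 1) + 1), hEv _⟩
    have hp1 : p.1 = j := by
      apply ZMod.val_injective d
      have h1 := hΦclass p
      rw [hp, hclass1 (κ (j - 1)), Nat.add_mod, hκcl (j - 1),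
        Nat.mod_eq_of_lt (by omega : 1 < d)] at h1
      rw [← h1]
      have h2 : (j - 1 + 1 : ZMod d).val = ((j - 1).val + (1 : ZMod d).val) % d :=
        ZMod.val_add _ _
      rw [sub_add_cancel] at h2
      rw [h2, ZMod.val_one_eq_one_mod, Nat.mod_eq_of_lt (by omega : 1 < d)]
    refine ⟨p.2, ?_⟩
    have hpe : (j, p.2) = p := by
      rw [← hp1]
    rw [hpe]
    exact hp
  choose istar hstar using hsur
  -- Sigma
  set Sg : ℕ := ∑ j : ZMod d, (istar j).val with hSgdef
  have hrn : r ≤ n := by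
    rw [hnrd]
    exact Nat.le_mul_of_pos_left r hd0
  have hSgmod : Sg ≡ t0 [MOD r] := by
    have hsum1 : ∑ j : ZMod d, Φ (j, istar j) = ∑ j : ZMod d, (κ (j - 1) + 1) :=
      Finset.sum_congr rfl (fun j _ => hstar j)
    have hlhs : ∑ j : ZMod d, Φ (j, istar j)
        = (∑ j : ZMod d, κ j) + ((Sg * m : ℕ) : ZMod n) := by
      simp only [hΦdef]
      rw [Finset.sum_add_distrib]
      congr 1
      rw [hSgdef, Finset.sum_mul, Nat.cast_sum]
    have hrhs : ∑ j : ZMod d, (κ (j - 1) + 1)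
        = (∑ j : ZMod d, κ j) + ((d : ℕ) : ZMod n) := by
      rw [Finset.sum_add_distrib]
      congr 1
      · exact Fintype.sum_equiv (Equiv.subRight (1 : ZMod d)) _ _ (fun j => rfl)
      · rw [Finset.sum_const, Finset.card_univ, ZMod.card d, nsmul_eq_mul, mul_one]
    have hcast : ((Sg * m : ℕ) : ZMod n) = ((d : ℕ) : ZMod n) := by
      have h := hsum1
      rw [hlhs, hrhs] at h
      exact add_left_cancel h
    have h1 : Sg * m ≡ d [MOD n] := (ZMod.natCast_eq_natCast_iff _ _ _).mp hcast
    have hmt0 : m * t0 ≡ d [MOD n] := by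
      show (m * t0) % n = d % n
      rw [ht0, add_comm, Nat.add_mul_mod_self_right]
    have h2 : m' * Sg ≡ m' * t0 [MOD r] := by
      apply Nat.ModEq.mul_left_cancel' (c := d) (by omega)
      have e1 : d * (m' * Sg) = Sg * m := by rw [hmd]; ring
      have e2 : d * (m' * t0) = m * t0 := by rw [hmd]; ring
      rw [e1, e2, ← hnrd]
      exact h1.trans hmt0.symm
    exact Nat.ModEq.cancel_left_of_coprime hcop.symm h2
  have ht0lb : n - r ≤ t0 := by
    by_contra hcon
    push_neg at hcon
    have h1 : t0 + r ≤ n - 1 := by omega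
    have hmr : m * r = m' * n := by rw [hmd, hnrd]; ring
    have h2 := ht0max (t0 + r) h1 ⟨α + m', by omega, by
      rw [Nat.mul_add, ht0, hmr]; ring⟩
    omega
  have hSgub : Sg + d ≤ n := by
    have h1 : Sg ≤ d * (r - 1) := by
      rw [hSgdef]
      calc ∑ j : ZMod d, (istar j).val ≤ ∑ _j : ZMod d, (r - 1) :=
            Finset.sum_le_sum (fun j _ => by have := (istar j).isLt; omega)
        _ = d * (r - 1) := by
            rw [Finset.sum_const, Finset.card_univ, ZMod.card d, smul_eq_mul]
    have h2 : d * (r - 1) + d = n := by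
      have h3 : (r - 1) + 1 = r := by omega
      calc d * (r - 1) + d = d * ((r - 1) + 1) := by ring
        _ = d * r := by rw [h3]
        _ = n := hnrd.symm
    omega
  have hSgle : Sg ≤ t0 := by
    by_contra hlt
    push_neg at hlt
    have hdvd : r ∣ Sg - t0 := (Nat.modEq_iff_dvd' (le_of_lt hlt)).mp hSgmod.symm
    have hge : r ≤ Sg - t0 := Nat.le_of_dvd (by omega) hdvd
    omega
  set b0 := (t0 - Sg) / r with hb0def
  have hb0 : b0 * r + Sg = t0 := by
    have hdvd : r ∣ t0 - Sg := (Nat.modEq_iff_dvd' hSgle).mp hSgmod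
    rw [hb0def, Nat.div_mul_cancel hdvd]
    omega
  -- the multiplicity function
  set B : ZMod d × Fin r → ℕ :=
    fun p => (if p.1 = 0 then b0 else 0) + (if p.2.val < (istar p.1).val then 1 else 0)
    with hBdef
  set s : ZMod n → ℕ := fun u => B (E.symm u) with hsdef
  set U : ZMod n → ℕ := fun v => if (E.symm v).2.val = 0 then 1 else 0 with hUdef
  set F : ZMod n → ℕ := fun v => ∑ l ∈ Finset.range m, s (v - (l : ZMod n)) with hFdef
  set i0 : Fin r := ⟨0, hr0⟩ with hi0def
  have hstep_s : ∀ v : ZMod n, s v + U (v - 1) = s (v - ((m : ℕ) : ZMod n)) + U v := by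
    intro v
    set j := (E.symm v).1 with hjdef
    set i := (E.symm v).2 with hidef
    have hv : v = Φ (j, i) := (hEv v).symm
    set i' : Fin r := ⟨(i.val + (r - 1)) % r, Nat.mod_lt _ hr0⟩ with hi'def
    have hcastm : ((i'.val * m + m : ℕ) : ZMod n) = ((i.val * m : ℕ) : ZMod n) := by
      rw [ZMod.natCast_eq_natCast_iff]
      have h1 : (i.val + (r - 1)) % r * m ≡ (i.val + (r - 1)) * m [MOD n] :=
        Nat.ModEq.of_dvd hrm ((Nat.mod_modEq (i.val + (r - 1)) r).mul_right' m)
      have h2 : (i.val + (r - 1)) * m + m = i.val * m + r * m := by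
        have h3 : (r - 1) + 1 = r := by omega
        calc (i.val + (r - 1)) * m + m = (i.val + ((r - 1) + 1)) * m := by ring
          _ = (i.val + r) * m := by rw [h3]
          _ = i.val * m + r * m := by ring
      have h4 : i.val * m + r * m ≡ i.val * m + 0 [MOD n] :=
        Nat.ModEq.add_left _ ((Nat.modEq_zero_iff_dvd).mpr hrm)
      calc i'.val * m + m ≡ (i.val + (r - 1)) * m + m [MOD n] := h1.add_right m
        _ = i.val * m + r * m := h2
        _ ≡ i.val * m + 0 [MOD n] := h4
        _ = i.val * m := by ring
    have hvm : v - ((m : ℕ) : ZMod n) = Φ (j, i') := by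
      rw [hv]
      simp only [hΦdef]
      rw [← hcastm]
      push_cast
      ring
    have hEm : E.symm (v - ((m : ℕ) : ZMod n)) = (j, i') := by rw [hvm]; exact hEsymm _
    have hU1 : U (v - 1) = (if i = istar j then 1 else 0) := by
      by_cases hii : i = istar j
      · rw [if_pos hii]
        have hv1 : v - 1 = Φ (j - 1, i0) := by
          have h5 : v = κ (j - 1) + 1 := by rw [hv, hii]; exact hstar j
          rw [h5]
          simp only [hΦdef, hi0def]
          push_cast
          ring
        simp only [hUdef]
        rw [hv1, hEsymm]
        simp [hi0def]
      · rw [if_neg hii]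
        simp only [hUdef]
        have h6 : (E.symm (v - 1)).2.val ≠ 0 := by
          intro h7
          set q : ZMod d × Fin r := E.symm (v - 1) with hqdef
          have hq2 : q.2 = i0 := Fin.ext (by rw [h7, hi0def])
          have hvq : v - 1 = Φ q := (hEv _).symm
          have h8 : v - 1 = κ q.1 := by
            conv_lhs => rw [hvq]
            simp only [hΦdef]
            rw [hq2, hi0def]
            simp
          have h9 : v = κ q.1 + 1 := by
            rw [← h8]; ring
          have h10 : v = Φ (q.1 + 1, istar (q.1 + 1)) := by
            rw [hstar (q.1 + 1), add_sub_cancel_right]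
            exact h9
          have h11 : E.symm v = (q.1 + 1, istar (q.1 + 1)) := by
            rw [h10, hEsymm]
          have hj10 : j = q.1 + 1 := by rw [hjdef, h11]
          have hi10 : i = istar (q.1 + 1) := by rw [hidef, h11]
          exact hii (by rw [hj10]; exact hi10)
        exact if_neg h6
    rw [hU1]
    simp only [hsdef, hBdef, hUdef]
    rw [hEm, ← hjdef, ← hidef]
    dsimp only
    have hfin : (if i = istar j then (1:ℕ) else 0)
        = (if i.val < (istar j).val + 1 ∧ (istar j).val < i.val + 1 then 1 else 0) := by
      by_cases h : i = istar j
      · rw [if_pos h, if_pos (by rw [h]; omega)]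
      · rw [if_neg h, if_neg (fun hc => h (Fin.ext (by omega)))]
    rw [hfin]
    have hmod : (i.val + (r - 1)) % r = if i.val = 0 then r - 1 else i.val - 1 := by
      by_cases h : i.val = 0
      · rw [if_pos h, h, zero_add, Nat.mod_eq_of_lt (by omega)]
      · rw [if_neg h]
        have h8 : i.val + (r - 1) = r + (i.val - 1) := by omega
        rw [h8, Nat.add_mod_left, Nat.mod_eq_of_lt (by have := i.isLt; omega)]
    simp only [hi'def, Fin.val_mk, hmod]
    have ha := i.isLt
    have hb := (istar j).isLt
    split_ifs <;> omega
  have hstep_F : ∀ v : ZMod n,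
      F v + s (v - ((m : ℕ) : ZMod n)) = F (v - 1) + s v := by
    intro v
    have h1 : F v + s (v - ((m : ℕ) : ZMod n))
        = ∑ l ∈ Finset.range (m + 1), s (v - (l : ZMod n)) := by
      rw [Finset.sum_range_succ]
    have h2 : ∑ l ∈ Finset.range (m + 1), s (v - (l : ZMod n))
        = (∑ l ∈ Finset.range m, s (v - ((l + 1 : ℕ) : ZMod n))) + s (v - ((0 : ℕ) : ZMod n)) :=
      Finset.sum_range_succ' _ m
    have h3 : ∀ l : ℕ, v - ((l + 1 : ℕ) : ZMod n) = (v - 1) - (l : ZMod n) := by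
      intro l; push_cast; ring
    rw [h1, h2, Finset.sum_congr rfl (fun l _ => by rw [h3 l])]
    rw [Nat.cast_zero, sub_zero]
  have hstepFU : ∀ v : ZMod n, F v + U (v - 1) = F (v - 1) + U v := by
    intro v
    have h1 := hstep_s v
    have h2 := hstep_F v
    omega
  have hconst : ∀ v : ZMod n, F v + U 0 = F 0 + U v := by
    have hnatk : ∀ k : ℕ, F ((k : ℕ) : ZMod n) + U 0 = F 0 + U ((k : ℕ) : ZMod n) := by
      intro k
      induction k with
      | zero => rw [Nat.cast_zero]
      | succ k ih =>
          have h1 := hstepFU ((k + 1 : ℕ) : ZMod n)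
          have h2 : ((k + 1 : ℕ) : ZMod n) - 1 = ((k : ℕ) : ZMod n) := by push_cast; ring
          rw [h2] at h1
          omega
    intro v
    have h := hnatk v.val
    rwa [ZMod.natCast_rightInverse v] at h
  have hsum_s : ∑ u : ZMod n, s u = t0 := by
    have h1 : ∑ u : ZMod n, s u = ∑ p : ZMod d × Fin r, B p := by
      simp only [hsdef]
      exact Equiv.sum_comp E.symm B
    rw [h1, Fintype.sum_prod_type]
    have h2 : ∀ jj : ZMod d, ∑ ii : Fin r, B (jj, ii)
        = (if jj = 0 then r * b0 else 0) + (istar jj).val := by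
      intro jj
      simp only [hBdef]
      rw [Finset.sum_add_distrib]
      congr 1
      · by_cases hjj : jj = 0 <;>
          simp [hjj, Finset.sum_const, Finset.card_univ, smul_eq_mul]
      · exact sum_fin_lt r _ (le_of_lt (istar jj).isLt)
    rw [Finset.sum_congr rfl (fun jj _ => h2 jj), Finset.sum_add_distrib,
      Finset.sum_ite_eq' Finset.univ (0 : ZMod d) (fun _ => r * b0)]
    simp only [Finset.mem_univ, if_true]
    rw [← hSgdef, mul_comm r b0]
    exact hb0
  have hsum_F : ∑ v : ZMod n, F v = m * t0 := by
    have h1 : ∑ v : ZMod n, F v = ∑ l ∈ Finset.range m, ∑ v : ZMod n, s (v - (l : ZMod n)) := by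
      simp only [hFdef]
      exact Finset.sum_comm
    have h2 : ∀ l : ℕ, ∑ v : ZMod n, s (v - (l : ZMod n)) = t0 := by
      intro l
      rw [← hsum_s]
      exact Fintype.sum_equiv (Equiv.subRight ((l : ℕ) : ZMod n))
        (fun v => s (v - (l : ZMod n))) s (fun v => rfl)
    rw [h1, Finset.sum_congr rfl (fun l _ => h2 l), Finset.sum_const, Finset.card_range,
      smul_eq_mul]
  have hsum_U : ∑ v : ZMod n, U v = d := by
    have h1 : ∑ v : ZMod n, U v
        = ∑ p : ZMod d × Fin r, (if p.2.val = 0 then (1:ℕ) else 0) := by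
      simp only [hUdef]
      exact Equiv.sum_comp E.symm (fun p : ZMod d × Fin r => if p.2.val = 0 then (1:ℕ) else 0)
    rw [h1, Fintype.sum_prod_type]
    have h2 : ∀ jj : ZMod d,
        ∑ ii : Fin r, (if (ii : Fin r).val = 0 then (1:ℕ) else 0) = 1 :=
      fun _ => sum_fin_eq_zero r hr0
    rw [Finset.sum_congr rfl (fun jj _ => h2 jj), Finset.sum_const, Finset.card_univ,
      ZMod.card d, smul_eq_mul, mul_one]
  have hF0 : F 0 = α + U 0 := by
    have h1 : ∑ v : ZMod n, (F v + U 0) = ∑ v : ZMod n, (F 0 + U v) :=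
      Finset.sum_congr rfl (fun v _ => hconst v)
    rw [Finset.sum_add_distrib, Finset.sum_add_distrib, hsum_F, hsum_U,
      Finset.sum_const, Finset.sum_const, Finset.card_univ, ZMod.card n,
      smul_eq_mul, smul_eq_mul] at h1
    have ht0' : m * t0 = n * α + d := by rw [ht0]; ring
    have h3 : n * F 0 = n * (α + U 0) := by rw [Nat.mul_add]; linarith
    exact Nat.eq_of_mul_eq_mul_left hn0 h3
  have hFall : ∀ v : ZMod n, F v = α + U v := by
    intro v
    have h1 := hconst v
    rw [hF0] at h1
    omega
  have hUe : ∀ v : ZMod n, U v ≤ e v := by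
    intro v
    simp only [hUdef]
    by_cases h : (E.symm v).2.val = 0
    · rw [if_pos h]
      have hq2 : (E.symm v).2 = i0 := Fin.ext (by rw [h, hi0def])
      have h8 : v = κ (E.symm v).1 := by
        conv_lhs => rw [← hEv v]
        simp only [hΦdef]
        rw [hq2, hi0def]
        simp
      rw [h8]
      exact Nat.one_le_iff_ne_zero.mpr (hκne _)
    · rw [if_neg h]
      exact Nat.zero_le _
  -- assemble the multiset
  set s' : ZMod n → ℕ := fun u => s u + (if u = 0 then t - t0 else 0) with hs'def
  set M : Multiset (ZMod n) :=
    (Finset.univ.val : Multiset (ZMod n)).bind (fun u => Multiset.replicate (s' u) u)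
    with hMdef
  have hsums' : ∑ u : ZMod n, s' u = t := by
    simp only [hs'def]
    rw [Finset.sum_add_distrib, hsum_s,
      Finset.sum_ite_eq' Finset.univ (0 : ZMod n) (fun _ => t - t0)]
    simp only [Finset.mem_univ, if_true]
    omega
  have hcardM : Multiset.card M = t := by
    rw [hMdef, Multiset.card_bind]
    have h1 : (Finset.univ.val.map (Multiset.card ∘ fun u => Multiset.replicate (s' u) u))
        = Finset.univ.val.map s' := by
      apply Multiset.map_congr rfl
      intro u _
      simp
    rw [h1]
    rw [← hsums']
    rfl
  have hMsum : (M.map (gen n m)).sum = ∑ u : ZMod n, s' u • gen n m u := by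
    rw [hMdef, Multiset.map_bind, Multiset.sum_bind]
    have h1 : (Finset.univ.val.map
          (fun u => ((Multiset.replicate (s' u) u).map (gen n m)).sum))
        = Finset.univ.val.map (fun u => s' u • gen n m u) := by
      apply Multiset.map_congr rfl
      intro u _
      rw [Multiset.map_replicate, Multiset.sum_replicate]
    rw [h1]
    rfl
  refine ⟨(M.map (gen n m)).sum, ⟨M, hcardM, rfl⟩, ?_⟩
  rw [hMsum, Finsupp.le_def]
  intro v
  have hLv : (∑ u : ZMod n, s' u • gen n m u) v = ∑ u : ZMod n, s' u * gen n m u v := by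
    rw [Finsupp.finset_sum_apply]
    apply Finset.sum_congr rfl
    intro u _
    rw [Finsupp.smul_apply, smul_eq_mul]
  have hsplit : ∑ u : ZMod n, s' u * gen n m u v
      = (∑ u : ZMod n, s u * gen n m u v)
        + ((t - t0) * gen n m 0 v) := by
    simp only [hs'def]
    rw [Finset.sum_congr rfl (fun u _ => by rw [add_mul] : ∀ u ∈ Finset.univ,
      (s u + (if u = 0 then t - t0 else 0)) * gen n m u v
        = s u * gen n m u v + (if u = 0 then t - t0 else 0) * gen n m u v)]
    rw [Finset.sum_add_distrib]
    congr 1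
    have h2 : ∀ u : ZMod n, (if u = 0 then t - t0 else 0) * gen n m u v
        = (if u = 0 then (t - t0) * gen n m u v else 0) := by
      intro u
      split_ifs <;> simp
    rw [Finset.sum_congr rfl (fun u _ => h2 u),
      Finset.sum_ite_eq' Finset.univ (0 : ZMod n) (fun u => (t - t0) * gen n m u v)]
    simp
  have hFv : ∑ u : ZMod n, s u * gen n m u v = F v := by
    rw [sum_mul_gen_eq m (le_of_lt hmn) s v]
  have hRv : (e + (α • gen n n 0 + (t - t0) • gen n m 0)) v
      = e v + (α * gen n n 0 v + (t - t0) * gen n m 0 v) := by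
    rw [Finsupp.add_apply, Finsupp.add_apply, Finsupp.smul_apply, Finsupp.smul_apply,
      smul_eq_mul, smul_eq_mul]
  have hgenn : gen n n 0 v = 1 := by
    rw [gen_apply n le_rfl]
    simp [ZMod.val_lt]
  rw [hLv, hsplit, hFv, hRv, hgenn, hFall v]
  have := hUe v
  omega


lemma wt_eq_monomial {K : Type*} [Field K] {n : ℕ} [NeZero n] (m α β : ℕ) :
    ((∏ j ∈ Finset.range n, X ((j : ℕ) : ZMod n)) ^ α *
        (∏ j ∈ Finset.range m, X ((j : ℕ) : ZMod n)) ^ β : MvPolynomial (ZMod n) K)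
      = monomial (α • gen n n 0 + β • gen n m 0) 1 := by
  have h1 : (∏ j ∈ Finset.range n, X ((j : ℕ) : ZMod n) : MvPolynomial (ZMod n) K)
      = monomial (gen n n 0) 1 := by
    rw [← prod_X_eq_monomial n n 0]
    exact Finset.prod_congr rfl (fun j _ => by rw [zero_add])
  have h2 : (∏ j ∈ Finset.range m, X ((j : ℕ) : ZMod n) : MvPolynomial (ZMod n) K)
      = monomial (gen n m 0) 1 := by
    rw [← prod_X_eq_monomial n m 0]
    exact Finset.prod_congr rfl (fun j _ => by rw [zero_add])
  rw [h1, h2, monomial_pow, monomial_pow, monomial_mul]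
  rw [one_pow, one_pow, one_mul]

end CWTaux

/-- If `d = gcd(n,m) > 1`, then for every `t ≥ t₀` one has `(J_{n,m}^t : w_t) = U_{n,d}`,
where `U_{n,d}` is the intersection, over the `d` residue classes `j` modulo `d`, of the
prime ideals generated by the variables whose index is `≡ j (mod d)`. -/
theorem colon_wt_eq_U_of_gcd_gt_one
    (K : Type*) [Field K] (n m : ℕ) (hm : 2 ≤ m) (hmn : m < n)
    (hd : 1 < Nat.gcd n m) (t0 α : ℕ) (hα : 0 < α) (ht0le : t0 ≤ n - 1)
    (ht0 : m * t0 = α * n + Nat.gcd n m)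
    (ht0max : ∀ s : ℕ, s ≤ n - 1 → (∃ β : ℕ, 0 < β ∧ m * s = β * n + Nat.gcd n m) → s ≤ t0)
    (t : ℕ) (ht : t0 ≤ t) :
    ((cyclePathIdeal K n m) ^ t).colon
      (Ideal.span {((∏ j ∈ Finset.range n, X ((j : ℕ) : ZMod n)) ^ α *
        (∏ j ∈ Finset.range m, X ((j : ℕ) : ZMod n)) ^ (t - t0) : MvPolynomial (ZMod n) K)})
      = ⨅ j ∈ Finset.range (Nat.gcd n m),
          Ideal.span { p : MvPolynomial (ZMod n) K |
            ∃ k : ZMod n, k.val % Nat.gcd n m = j ∧ p = X k } := by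
  classical
  haveI : NeZero n := ⟨by omega⟩
  have hdn : Nat.gcd n m ∣ n := Nat.gcd_dvd_left n m
  have hdm : Nat.gcd n m ∣ m := Nat.gcd_dvd_right n m
  have hcop : Nat.Coprime (m / Nat.gcd n m) (n / Nat.gcd n m) := by
    have h0 : 0 < Nat.gcd m n := Nat.gcd_pos_of_pos_right m (by omega)
    have := Nat.coprime_div_gcd_div_gcd h0
    rwa [Nat.gcd_comm m n] at this
  rw [CWTaux.cyclePathIdeal_eq, CWTaux.span_monomial_pow, CWTaux.wt_eq_monomial m α (t - t0)]
  ext p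
  rw [CWTaux.mem_colon_span_monomial, CWTaux.mem_inf_span_X]
  constructor
  · intro h e he j hj
    exact CWTaux.core_forward (le_of_lt hmn) hd hdn hdm t0 α t ht0 ht e (h e he) j hj
  · intro h e he
    exact CWTaux.core_backward hm hmn hd hdn hdm hcop t0 α t hα ht0 ht0max ht e
      (fun j hj => h e he j hj)
end

section
/- Let n ≥ 5 be an odd integer. Then depth(S/J_{n,n−2}^t) = 0 for all integers t ≥ (n−1)/2. -/
open MvPolynomial

/-- The depth of `S/I` with respect to the maximal graded ideal `(x_0, …, x_{n-1})`:
the maximal length of an `S/I`-regular sequence of elements of the maximal graded ideal. -/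
noncomputable def quotDepth {K : Type*} [Field K] {σ : Type*}
    (I : Ideal (MvPolynomial σ K)) : ℕ :=
  sSup { k : ℕ | ∃ rs : List (MvPolynomial σ K), rs.length = k ∧
    (∀ r ∈ rs, r ∈ maxIdeal K σ) ∧
    RingTheory.Sequence.IsRegular (MvPolynomial σ K ⧸ I) rs }

namespace DepthAux

variable {K : Type*} [Field K]

lemma prod_monomial {σ α : Type*} (F : Finset α) (f : α → (σ →₀ ℕ)) :
    (∏ j ∈ F, monomial (f j) (1 : K)) = monomial (∑ j ∈ F, f j) 1 := by
  induction F using Finset.cons_induction with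
  | empty => simp
  | cons a F ha ih => rw [Finset.prod_cons, Finset.sum_cons, ih, monomial_mul, one_mul]

lemma prod_X_eq {σ α : Type*} (F : Finset α) (f : α → σ) :
    (∏ j ∈ F, (X (f j) : MvPolynomial σ K)) =
      monomial (∑ j ∈ F, Finsupp.single (f j) 1) 1 := by
  simp only [X]
  exact prod_monomial F _

lemma prod_mem_pow {R : Type*} [CommRing R] (I : Ideal R) (f : ℕ → R) :
    ∀ k : ℕ, (∀ r < k, f r ∈ I) → ∏ r ∈ Finset.range k, f r ∈ I ^ k := by
  intro k
  induction k with
  | zero => simp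
  | succ k ih =>
      intro h
      rw [Finset.prod_range_succ, pow_succ]
      exact Ideal.mul_mem_mul (ih fun r hr => h r (by omega)) (h k (by omega))

variable {n : ℕ} [NeZero n]

/-- total degree (weight) of an exponent vector -/
def wt (ξ : ZMod n →₀ ℕ) : ℕ := ∑ a : ZMod n, ξ a

lemma wt_add (ξ η : ZMod n →₀ ℕ) : wt (ξ + η) = wt ξ + wt η := by
  simp [wt, Finset.sum_add_distrib]

lemma wt_smul (k : ℕ) (ξ : ZMod n →₀ ℕ) : wt (k • ξ) = k * wt ξ := by
  simp [wt, Finset.mul_sum]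

lemma wt_mono {ξ η : ZMod n →₀ ℕ} (h : ξ ≤ η) : wt ξ ≤ wt η :=
  Finset.sum_le_sum fun a _ => Finsupp.le_def.mp h a

/-- exponent vector of the path monomial starting at i -/
noncomputable def pexp (n m : ℕ) (i : ZMod n) : ZMod n →₀ ℕ :=
  ∑ j ∈ Finset.range m, Finsupp.single (i + (j : ZMod n)) 1

lemma wt_pexp (m : ℕ) (i : ZMod n) : wt (pexp n m i) = m := by
  simp only [wt, pexp, Finset.sum_apply', Finsupp.single_apply]
  rw [Finset.sum_comm]
  simp

lemma pexp_apply (m : ℕ) (hm : m ≤ n) (i a : ZMod n) :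
    pexp n m i a = if (a - i).val < m then 1 else 0 := by
  rw [pexp, Finset.sum_apply']
  have h : ∀ j ∈ Finset.range m,
      (Finsupp.single (i + (j : ZMod n)) (1:ℕ)) a = if j = (a - i).val then 1 else 0 := by
    intro j hj
    rw [Finsupp.single_apply]
    congr 1
    rw [eq_iff_iff]
    rw [Finset.mem_range] at hj
    constructor
    · intro h
      have : (j : ZMod n) = a - i := by rw [← h]; ring
      rw [← this, ZMod.val_cast_of_lt (by omega)]
    · intro h
      subst h
      rw [ZMod.natCast_rightInverse (a - i)]
      ring
  rw [Finset.sum_congr rfl h, Finset.sum_ite_eq' (Finset.range m)]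
  simp [Finset.mem_range]

/-- the ideal spanned by all monomials of weight at least `N` -/
noncomputable def lowI (K : Type*) [Field K] (n N : ℕ) [NeZero n] :
    Ideal (MvPolynomial (ZMod n) K) :=
  Ideal.span ((fun ξ => monomial ξ (1 : K)) '' {ξ : ZMod n →₀ ℕ | N ≤ wt ξ})

lemma monomial_mem_lowI {N : ℕ} {ξ : ZMod n →₀ ℕ} (h : N ≤ wt ξ) :
    monomial ξ (1 : K) ∈ lowI K n N :=
  Ideal.subset_span ⟨ξ, h, rfl⟩

lemma lowI_mul_le (N M : ℕ) : lowI K n N * lowI K n M ≤ lowI K n (N + M) := by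
  rw [lowI, lowI, Ideal.span_mul_span]
  rw [Ideal.span_le]
  rintro x hx
  simp only [Set.mem_mul] at hx
  obtain ⟨y, ⟨ξ, hξ, rfl⟩, z, ⟨η, hη, rfl⟩, rfl⟩ := hx
  simp only [Set.mem_setOf_eq] at hξ hη
  have : monomial ξ (1 : K) * monomial η 1 = monomial (ξ + η) 1 := by
    rw [monomial_mul, one_mul]
  rw [SetLike.mem_coe, this]
  exact monomial_mem_lowI (by rw [wt_add]; omega)

lemma cycle_le_lowI (m : ℕ) : cyclePathIdeal K n m ≤ lowI K n m := by
  rw [cyclePathIdeal, Ideal.span_le]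
  rintro p ⟨i, rfl⟩
  rw [SetLike.mem_coe, prod_X_eq]
  exact monomial_mem_lowI (by rw [← pexp, wt_pexp])

lemma pow_cycle_le_lowI (m t : ℕ) : (cyclePathIdeal K n m) ^ t ≤ lowI K n (m * t) := by
  induction t with
  | zero =>
      have h1 : (1 : MvPolynomial (ZMod n) K) ∈ lowI K n 0 := by
        have := monomial_mem_lowI (K := K) (n := n) (ξ := (0 : ZMod n →₀ ℕ)) (Nat.zero_le _)
        simpa using this
      rw [pow_zero, mul_zero, Ideal.one_eq_top]
      exact ((Ideal.eq_top_iff_one _).mpr h1).ge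
  | succ t ih =>
      rw [pow_succ, Nat.mul_succ]
      exact le_trans (Ideal.mul_mono ih (cycle_le_lowI m)) (lowI_mul_le _ _)

lemma not_mem_lowI {N : ℕ} {ξ : ZMod n →₀ ℕ} (h : wt ξ < N) :
    monomial ξ (1 : K) ∉ lowI K n N := by
  intro hmem
  rw [lowI] at hmem
  obtain ⟨η, hη, hle⟩ := mem_ideal_span_monomial_image.mp hmem ξ (by
    rw [mem_support_iff, coeff_monomial, if_pos rfl]; exact one_ne_zero)
  exact absurd (le_trans hη (wt_mono hle)) (by omega)

noncomputable def cv (n s : ℕ) [NeZero n] : ZMod n →₀ ℕ :=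
  ∑ a : ZMod n, Finsupp.single a (s - 1)

lemma cv_apply (s : ℕ) (a : ZMod n) : cv n s a = s - 1 := by
  rw [cv, Finset.sum_apply']
  simp only [Finsupp.single_apply]
  rw [Finset.sum_ite_eq' Finset.univ a fun _ => s - 1]
  simp

lemma wt_cv (s : ℕ) : wt (cv n s) = n * (s - 1) := by
  have : wt (cv n s) = ∑ _a : ZMod n, (s - 1) := Finset.sum_congr rfl fun a _ => cv_apply s a
  rw [this, Finset.sum_const, Finset.card_univ, ZMod.card, smul_eq_mul]

lemma key_mem (s : ℕ) (hn5 : 5 ≤ n) (hns : n = 2 * s + 1) (j : ZMod n) :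
    (X j : MvPolynomial (ZMod n) K) * monomial (cv n s) 1
      ∈ (cyclePathIdeal K n (n - 2)) ^ s := by
  have hs2 : 2 ≤ s := by omega
  set m := n - 2 with hm
  set f : ℕ → ZMod n := fun r => j + ((2 * r + 3 : ℕ) : ZMod n) with hf
  set Γ : ZMod n →₀ ℕ := ∑ r ∈ Finset.range s, pexp n m (f r) with hΓ
  have hq : monomial Γ (1 : K) ∈ (cyclePathIdeal K n m) ^ s := by
    rw [hΓ, ← prod_monomial]
    refine prod_mem_pow _ _ s fun r hr => ?_
    refine Ideal.subset_span ⟨f r, ?_⟩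
    rw [prod_X_eq]
    rfl
  have hle : Γ ≤ Finsupp.single j 1 + cv n s := by
    rw [Finsupp.le_def]
    intro a
    rw [Finsupp.add_apply, cv_apply, Finsupp.single_apply, hΓ, Finset.sum_apply']
    have hone : ∀ r ∈ Finset.range s, pexp n m (f r) a ≤ 1 := by
      intro r hr
      rw [pexp_apply _ (by omega)]
      split <;> omega
    by_cases haj : j = a
    · calc ∑ r ∈ Finset.range s, pexp n m (f r) a ≤ ∑ _r ∈ Finset.range s, 1 :=
            Finset.sum_le_sum hone
        _ = s := by simp
        _ ≤ _ := by rw [if_pos haj]; omega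
    · have hb : a - j ≠ 0 := sub_ne_zero.mpr fun h => haj h.symm
      set v := (a - j).val with hv
      have hv1 : 1 ≤ v := by
        rcases Nat.eq_zero_or_pos v with h | h
        · exact absurd ((ZMod.val_eq_zero _).mp h) hb
        · omega
      have hvn : v < n := ZMod.val_lt _
      obtain ⟨r0, hr0, hval⟩ : ∃ r0, r0 < s ∧ ¬ ((a - f r0).val < m) := by
        have hcast : ((v : ℕ) : ZMod n) = a - j := ZMod.natCast_rightInverse (a - j)
        rcases Nat.even_or_odd v with he | ho
        · refine ⟨(v - 2) / 2, by omega, ?_⟩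
          have h23 : (2 * ((v - 2) / 2) + 3 : ℕ) = v + 1 := by
            obtain ⟨w, hw⟩ := he; omega
          have heq : a - f ((v - 2) / 2) = -1 := by
            rw [hf]
            simp only
            rw [h23]
            push_cast
            rw [hcast]
            ring
          rw [heq]
          have h1 : ((-1 : ZMod n)) = ((n - 1 : ℕ) : ZMod n) := by
            rw [Nat.cast_sub (by omega : 1 ≤ n), ZMod.natCast_self]
            push_cast
            ring
          rw [h1, ZMod.val_cast_of_lt (by omega)]
          omega
        · refine ⟨(v - 1) / 2, by omega, ?_⟩
          have h23 : (2 * ((v - 1) / 2) + 3 : ℕ) = v + 2 := by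
            obtain ⟨w, hw⟩ := ho; omega
          have heq : a - f ((v - 1) / 2) = -2 := by
            rw [hf]
            simp only
            rw [h23]
            push_cast
            rw [hcast]
            ring
          rw [heq]
          have h1 : ((-2 : ZMod n)) = ((n - 2 : ℕ) : ZMod n) := by
            rw [Nat.cast_sub (by omega : 2 ≤ n), ZMod.natCast_self]
            push_cast
            ring
          rw [h1, ZMod.val_cast_of_lt (by omega)]
          omega
      have hterm : pexp n m (f r0) a = 0 := by
        rw [pexp_apply _ (by omega)]
        exact if_neg hval
      have hr0mem : r0 ∈ Finset.range s := Finset.mem_range.mpr hr0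
      have hbound : ∑ r ∈ Finset.range s, pexp n m (f r) a ≤ s - 1 := by
        rw [← Finset.sum_erase_add _ _ hr0mem, hterm, add_zero]
        calc ∑ r ∈ (Finset.range s).erase r0, pexp n m (f r) a
            ≤ ∑ _r ∈ (Finset.range s).erase r0, 1 :=
              Finset.sum_le_sum fun r hr => hone r (Finset.mem_of_mem_erase hr)
          _ = s - 1 := by
              rw [Finset.sum_const, Finset.card_erase_of_mem hr0mem, Finset.card_range,
                smul_eq_mul, mul_one]
      rw [if_neg haj]
      omega
  have hXu : (X j : MvPolynomial (ZMod n) K) * monomial (cv n s) 1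
      = monomial (Finsupp.single j 1 + cv n s) 1 := by
    rw [X, monomial_mul, one_mul]
  rw [hXu]
  obtain ⟨w, hw⟩ : monomial Γ (1 : K) ∣ monomial (Finsupp.single j 1 + cv n s) 1 :=
    monomial_dvd_monomial.mpr ⟨Or.inr hle, dvd_refl 1⟩
  rw [hw]
  exact Ideal.mul_mem_right _ _ hq

omit [NeZero n] in
lemma gen_mem (m : ℕ) (i : ZMod n) :
    monomial (pexp n m i) (1 : K) ∈ cyclePathIdeal K n m := by
  refine Ideal.subset_span ⟨i, ?_⟩
  rw [prod_X_eq]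
  rfl

lemma key_mem_all (s t : ℕ) (hn5 : 5 ≤ n) (hns : n = 2 * s + 1) (ht : s ≤ t) (j : ZMod n) :
    (X j : MvPolynomial (ZMod n) K) * monomial (cv n s + (t - s) • pexp n (n - 2) 0) 1
      ∈ (cyclePathIdeal K n (n - 2)) ^ t := by
  obtain ⟨k, rfl⟩ : ∃ k, t = s + k := ⟨t - s, by omega⟩
  have e : s + k - s = k := by omega
  rw [e]
  have hsplit : monomial (cv n s + k • pexp n (n - 2) 0) (1 : K)
      = monomial (cv n s) 1 * (monomial (pexp n (n - 2) 0) 1) ^ k := by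
    rw [monomial_pow, one_pow, monomial_mul, one_mul]
  have h2 : (monomial (pexp n (n - 2) 0) (1 : K)) ^ k
      ∈ (cyclePathIdeal K n (n - 2)) ^ k :=
    Ideal.pow_mem_pow (gen_mem _ _) _
  rw [hsplit, ← mul_assoc, pow_add]
  exact Ideal.mul_mem_mul (key_mem s hn5 hns j) h2

lemma key_notmem (s t : ℕ) (hn5 : 5 ≤ n) (hns : n = 2 * s + 1) (ht : s ≤ t) :
    monomial (cv n s + (t - s) • pexp n (n - 2) 0) (1 : K)
      ∉ (cyclePathIdeal K n (n - 2)) ^ t := by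
  intro h
  have h2 := pow_cycle_le_lowI (K := K) (n := n) (n - 2) t h
  refine not_mem_lowI ?_ h2
  rw [wt_add, wt_cv, wt_smul, wt_pexp]
  obtain ⟨k, rfl⟩ : ∃ k, t = s + k := ⟨t - s, by omega⟩
  obtain ⟨s', rfl⟩ : ∃ s', s = s' + 2 := ⟨s - 2, by omega⟩
  subst hns
  have e1 : s' + 2 - 1 = s' + 1 := by omega
  have e2 : 2 * (s' + 2) + 1 - 2 = 2 * s' + 3 := by omega
  have e3 : s' + 2 + k - (s' + 2) = k := by omega
  rw [e1, e2, e3]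
  nlinarith

end DepthAux


/-- If `n ≥ 5` is odd, then `depth(S/J_{n,n-2}^t) = 0` for all `t ≥ (n-1)/2`. -/
theorem depth_eq_zero_odd
    (K : Type*) [Field K] (n : ℕ) (hn : 5 ≤ n) (hodd : Odd n)
    (t : ℕ) (ht : (n - 1) / 2 ≤ t) :
    quotDepth ((cyclePathIdeal K n (n - 2)) ^ t) = 0 := by
  haveI : NeZero n := ⟨by omega⟩
  obtain ⟨s, hs⟩ := hodd
  have hns : n = 2 * s + 1 := by omega
  have hst : s ≤ t := by omega
  set I := (cyclePathIdeal K n (n - 2)) ^ t with hI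
  set u := monomial (DepthAux.cv n s + (t - s) • DepthAux.pexp n (n - 2) 0) (1 : K) with hu
  have hu_not : u ∉ I := DepthAux.key_notmem s t hn hns hst
  have hXu : ∀ j : ZMod n, X j * u ∈ I := fun j => DepthAux.key_mem_all s t hn hns hst j
  have hru : ∀ r ∈ maxIdeal K (ZMod n), r * u ∈ I := by
    intro r hr
    have hcolon : maxIdeal K (ZMod n) ≤ I.colon (Ideal.span {u}) := by
      rw [maxIdeal, Ideal.span_le]
      rintro _ ⟨i, rfl⟩
      rw [SetLike.mem_coe, Ideal.mem_colon_span_singleton]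
      exact hXu i
    exact Ideal.mem_colon_span_singleton.mp (hcolon hr)
  have hIne : I ≠ ⊤ := fun h => hu_not (h ▸ Submodule.mem_top)
  haveI : Nontrivial (MvPolynomial (ZMod n) K ⧸ I) := Ideal.Quotient.nontrivial_iff.mpr hIne
  have hset : { k : ℕ | ∃ rs : List (MvPolynomial (ZMod n) K), rs.length = k ∧
      (∀ r ∈ rs, r ∈ maxIdeal K (ZMod n)) ∧
      RingTheory.Sequence.IsRegular (MvPolynomial (ZMod n) K ⧸ I) rs } = {0} := by
    ext k
    simp only [Set.mem_setOf_eq, Set.mem_singleton_iff]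
    constructor
    · rintro ⟨rs, hlen, hmem, hreg⟩
      rcases rs with _ | ⟨r, rest⟩
      · simpa using hlen.symm
      · exfalso
        have hw := hreg.toIsWeaklyRegular
        rw [RingTheory.Sequence.isWeaklyRegular_cons_iff] at hw
        have hr : IsSMulRegular (MvPolynomial (ZMod n) K ⧸ I) r := hw.1
        have h0 : r • (Ideal.Quotient.mk I u) = r • (0 : MvPolynomial (ZMod n) K ⧸ I) := by
          rw [smul_zero, ← Ideal.Quotient.mk_eq_mk, ← Submodule.Quotient.mk_smul,
            smul_eq_mul, Ideal.Quotient.mk_eq_mk, Ideal.Quotient.eq_zero_iff_mem]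
          exact hru r (hmem r (List.mem_cons_self))
        have hmk := hr h0
        rw [Ideal.Quotient.eq_zero_iff_mem] at hmk
        exact hu_not hmk
    · rintro rfl
      exact ⟨[], rfl, by simp, RingTheory.Sequence.IsRegular.nil _ _⟩
  rw [quotDepth, hset]
  exact csSup_singleton 0
end

section
/- Let n ≥ 4 be an even integer. Then depth(S/J_{n,n−2}^t) ≤ 1 for all integers t ≥ n − 1. -/
open MvPolynomial

open scoped Pointwise
open Finset

-- key lemma
theorem key_lemma {R M : Type*} [CommRing R] [AddCommGroup M] [Module R M]
    {ι : Type*} [Fintype ι] (x : ι → R) {r1 r2 : R}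
    (h1 : IsSMulRegular M r1) (h2 : IsSMulRegular (QuotSMulTop r1 M) r2)
    (hr1 : r1 ∈ Submodule.span R (Set.range x))
    (hr2 : r2 ∈ Submodule.span R (Set.range x))
    (w : ι → M) (hw : ∀ a b, x a • w b = x b • w a) :
    ∃ v : M, ∀ a, w a = x a • v := by
  obtain ⟨c, hc⟩ := (Submodule.mem_span_range_iff_exists_fun R).mp hr1
  obtain ⟨d, hd⟩ := (Submodule.mem_span_range_iff_exists_fun R).mp hr2
  set W : M := ∑ a, c a • w a with hW
  have claim1 : ∀ b, x b • W = r1 • w b := by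
    intro b
    rw [hW, Finset.smul_sum, ← hc, Finset.sum_smul]
    refine Finset.sum_congr rfl fun a _ => ?_
    rw [smul_comm, ← hw a b, smul_smul, smul_eq_mul]
  have claim2 : r2 • W = r1 • ∑ b, d b • w b := by
    rw [← hd, Finset.sum_smul, Finset.smul_sum]
    refine Finset.sum_congr rfl fun b _ => ?_
    rw [smul_eq_mul, ← smul_smul, claim1 b]
    exact smul_comm _ _ _
  have hmk : r2 • (Submodule.Quotient.mk W : QuotSMulTop r1 M) = 0 := by
    rw [← Submodule.Quotient.mk_smul, claim2, Submodule.Quotient.mk_eq_zero]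
    exact Submodule.smul_mem_pointwise_smul _ _ _ Submodule.mem_top
  have hW0 : W ∈ r1 • (⊤ : Submodule R M) := by
    have h0 : r2 • (Submodule.Quotient.mk W : QuotSMulTop r1 M) = r2 • (0 : QuotSMulTop r1 M) := by
      rw [hmk, smul_zero]
    have := h2 h0
    rwa [← Submodule.Quotient.mk_eq_zero]
  rw [← SetLike.mem_coe, Submodule.coe_pointwise_smul] at hW0
  obtain ⟨u, -, hu⟩ := hW0
  refine ⟨u, fun b => h1 ?_⟩
  show r1 • w b = r1 • (x b • u)
  rw [← claim1 b, ← hu, smul_comm]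


namespace DepthAux

variable {K : Type*} [Field K] {n : ℕ}

lemma prod_monomial_one {α : Type*} (s : Finset α) (f : α → (ZMod n →₀ ℕ)) :
    (∏ a ∈ s, (monomial (f a) (1 : K))) = monomial (∑ a ∈ s, f a) 1 := by
  induction s using Finset.cons_induction with
  | empty => simp
  | cons a s ha ih => rw [Finset.prod_cons, Finset.sum_cons, ih, monomial_mul, one_mul]

/-- exponent vector of the generator starting at `i`. -/
noncomputable def Wwin (n : ℕ) (i : ZMod n) : ZMod n →₀ ℕ :=
  ∑ j ∈ range (n-2), Finsupp.single (i + (j : ZMod n)) 1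

lemma cyclePathIdeal_eq (K : Type*) [Field K] (n : ℕ) :
    cyclePathIdeal K n (n-2)
      = Ideal.span ((fun s => monomial s (1 : K)) '' (Set.range (Wwin n))) := by
  unfold cyclePathIdeal
  congr 1
  ext p
  constructor
  · rintro ⟨i, rfl⟩
    refine ⟨Wwin n i, ⟨i, rfl⟩, ?_⟩
    show monomial (Wwin n i) (1:K) = _
    rw [Wwin, ← prod_monomial_one]; rfl
  · rintro ⟨E, ⟨i, rfl⟩, rfl⟩
    refine ⟨i, ?_⟩
    show monomial (Wwin n i) (1:K) = _
    rw [Wwin, ← prod_monomial_one]; rfl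

lemma val_eq_iff (hn : 4 ≤ n) {a : ZMod n} {k : ℕ} (hk : k < n) :
    a = (k : ZMod n) ↔ a.val = k := by
  haveI : NeZero n := ⟨by omega⟩
  constructor
  · rintro rfl; exact ZMod.val_cast_of_lt hk
  · rintro h
    have : ((a.val : ℕ) : ZMod n) = (k : ZMod n) := by rw [h]
    rwa [ZMod.natCast_val, ZMod.cast_id] at this

lemma Wwin_apply (hn : 4 ≤ n) (i v : ZMod n) :
    Wwin n i v = if (v - i).val < n - 2 then 1 else 0 := by
  haveI : NeZero n := ⟨by omega⟩
  rw [Wwin, Finsupp.finset_sum_apply]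
  have key : ∀ j ∈ range (n-2),
      (Finsupp.single (i + (j : ZMod n)) 1 : ZMod n →₀ ℕ) v
        = if j = (v - i).val then 1 else 0 := by
    intro j hj
    rw [Finsupp.single_apply]
    refine if_congr ?_ rfl rfl
    rw [Finset.mem_range] at hj
    constructor
    · rintro h
      have h2 : (j : ZMod n) = v - i := by rw [← h]; ring
      have := ZMod.val_cast_of_lt (show j < n by omega)
      rw [h2] at this; omega
    · rintro rfl
      have : ((v - i).val : ZMod n) = v - i := by rw [ZMod.natCast_val, ZMod.cast_id]
      rw [this]; ring
  rw [Finset.sum_congr rfl key, Finset.sum_ite_eq' (range (n-2)) ((v-i).val) (fun _ => 1)]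
  simp

lemma Wwin_eq_zero_iff (hn : 4 ≤ n) (i v : ZMod n) :
    Wwin n i v = 0 ↔ (i = v + 1 ∨ i = v + 2) := by
  haveI : NeZero n := ⟨by omega⟩
  rw [Wwin_apply hn]
  have hval : (v - i).val < n := ZMod.val_lt _
  have c1 : ((n - 1 : ℕ) : ZMod n) = -1 := by
    rw [Nat.cast_sub (by omega : 1 ≤ n)]
    simp [ZMod.natCast_self]
  have c2 : ((n - 2 : ℕ) : ZMod n) = -2 := by
    rw [Nat.cast_sub (by omega : 2 ≤ n)]
    simp [ZMod.natCast_self]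
  have e1 : i = v + 1 ↔ (v - i).val = n - 1 := by
    rw [← val_eq_iff hn (by omega : n - 1 < n), c1]
    constructor
    · intro h; rw [h]; ring
    · intro h; linear_combination -h
  have e2 : i = v + 2 ↔ (v - i).val = n - 2 := by
    rw [← val_eq_iff hn (by omega : n - 2 < n), c2]
    constructor
    · intro h; rw [h]; ring
    · intro h; linear_combination -h
  rw [e1, e2]
  constructor
  · intro h
    split_ifs at h with hcond
    omega
  · intro h
    split_ifs with hcond
    · rcases h with h | h <;> omega
    · rfl

lemma Wwin_eq_one (hn : 4 ≤ n) {i v : ZMod n} (h : ¬ (i = v + 1 ∨ i = v + 2)) :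
    Wwin n i v = 1 := by
  have h0 := (Wwin_eq_zero_iff hn i v).not.mpr h
  rw [Wwin_apply hn] at h0 ⊢
  split_ifs at h0 ⊢ with hc
  · rfl
  · exact absurd rfl h0

lemma two_ne_one' (hn : 4 ≤ n) : (1 : ZMod n) ≠ 2 := by
  haveI : NeZero n := ⟨by omega⟩
  intro h
  have h1 : ((1:ℕ) : ZMod n) = ((2:ℕ) : ZMod n) := by push_cast; exact h
  have := (val_eq_iff hn (show (2:ℕ) < n by omega)).mp h1
  rw [ZMod.val_cast_of_lt (show (1:ℕ) < n by omega)] at this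
  omega

lemma sum_smul_Wwin_apply [NeZero n] (hn : 4 ≤ n) (m : ZMod n → ℕ) (v : ZMod n) :
    (∑ i, m i • Wwin n i) v + (m (v+1) + m (v+2)) = ∑ i, m i := by
  rw [Finsupp.finset_sum_apply]
  have h12 : (v + 1 : ZMod n) ≠ v + 2 := fun h => two_ne_one' hn (by exact add_left_cancel h)
  have hpt : ∀ i : ZMod n,
      (m i • Wwin n i) v + ((if i = v+1 then m i else 0) + (if i = v+2 then m i else 0)) = m i := by
    intro i
    rw [Finsupp.smul_apply, smul_eq_mul]
    by_cases h1 : i = v + 1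
    · rw [if_pos h1, if_neg (by rw [h1]; exact h12), (Wwin_eq_zero_iff hn i v).mpr (Or.inl h1)]
      omega
    · by_cases h2 : i = v + 2
      · rw [if_pos h2, if_neg h1, (Wwin_eq_zero_iff hn i v).mpr (Or.inr h2)]
        omega
      · rw [if_neg h1, if_neg h2, Wwin_eq_one hn (by tauto)]
        omega
  calc (∑ i, (m i • Wwin n i) v) + (m (v+1) + m (v+2))
      = (∑ i, (m i • Wwin n i) v) + ((∑ i, if i = v+1 then m i else 0)
          + (∑ i, if i = v+2 then m i else 0)) := by
        rw [Finset.sum_ite_eq' Finset.univ (v+1) m, Finset.sum_ite_eq' Finset.univ (v+2) m]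
        simp
    _ = ∑ i, ((m i • Wwin n i) v + ((if i = v+1 then m i else 0) + (if i = v+2 then m i else 0))) := by
        rw [Finset.sum_add_distrib, Finset.sum_add_distrib]
    _ = ∑ i, m i := Finset.sum_congr rfl fun i _ => hpt i

lemma sum_add_single [NeZero n] (m : ZMod n → ℕ) (i0 : ZMod n) :
    ∑ a, (m a + if a = i0 then 1 else 0) = (∑ a, m a) + 1 := by
  rw [Finset.sum_add_distrib, Finset.sum_ite_eq' Finset.univ i0 (fun _ => 1)]
  simp

lemma sum_smul_add_single [NeZero n] (m : ZMod n → ℕ) (i0 : ZMod n) :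
    ∑ a, (m a + if a = i0 then 1 else 0) • Wwin n a
      = (∑ a, m a • Wwin n a) + Wwin n i0 := by
  have hpt : ∀ a : ZMod n, (m a + if a = i0 then 1 else 0) • Wwin n a
      = m a • Wwin n a + (if a = i0 then Wwin n a else 0) := by
    intro a; by_cases h : a = i0 <;> simp [h, add_smul]
  rw [Finset.sum_congr rfl (fun a _ => hpt a), Finset.sum_add_distrib,
    Finset.sum_ite_eq' Finset.univ i0 (Wwin n)]
  simp

lemma pow_eq_span [NeZero n] (hn : 4 ≤ n) (k : ℕ) :
    (cyclePathIdeal K n (n-2)) ^ k =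
      Ideal.span ((fun s => monomial s (1:K)) ''
        {E | ∃ m : ZMod n → ℕ, (∑ i, m i) = k ∧ E = ∑ i, m i • Wwin n i}) := by
  induction k with
  | zero =>
    rw [pow_zero, Ideal.one_eq_top, eq_comm, Ideal.eq_top_iff_one]
    apply Ideal.subset_span
    exact ⟨0, ⟨fun _ => 0, by simp, by simp⟩, by simp⟩
  | succ k ih =>
    rw [pow_succ, ih, cyclePathIdeal_eq K n, Ideal.span_mul_span']
    congr 1
    ext p
    constructor
    · intro hp
      rw [Set.mem_mul] at hp
      obtain ⟨a, ha, b, hb, rfl⟩ := hp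
      obtain ⟨E, ⟨m, hsum, hE⟩, rfl⟩ := ha
      obtain ⟨F, ⟨i0, rfl⟩, rfl⟩ := hb
      refine ⟨E + Wwin n i0, ⟨fun a => m a + if a = i0 then 1 else 0, ?_, ?_⟩, ?_⟩
      · rw [sum_add_single, hsum]
      · rw [sum_smul_add_single, hE]
      · show monomial (E + Wwin n i0) (1:K) = _
        rw [monomial_mul, one_mul]
    · rintro ⟨E, ⟨m, hsum, hE⟩, rfl⟩
      have hne : ∃ i0 : ZMod n, m i0 ≠ 0 := by
        by_contra hall
        push_neg at hall
        rw [Finset.sum_eq_zero (fun i _ => hall i)] at hsum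
        omega
      obtain ⟨i0, hi0⟩ := hne
      set m' : ZMod n → ℕ := fun a => if a = i0 then m a - 1 else m a with hm'
      have hdec : ∀ a, m a = m' a + if a = i0 then 1 else 0 := by
        intro a
        by_cases h : a = i0 <;> simp [hm', h]
        · subst h; omega
      have hsum' : (∑ i, m' i) = k := by
        have h2 : ∑ i, m i = (∑ i, m' i) + 1 := by
          rw [Finset.sum_congr rfl fun a _ => hdec a, sum_add_single]
        omega
      have hEeq : E = (∑ i, m' i • Wwin n i) + Wwin n i0 := by
        rw [hE, Finset.sum_congr rfl (fun a _ => by rw [hdec a]), sum_smul_add_single]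
      rw [Set.mem_mul]
      refine ⟨monomial (∑ i, m' i • Wwin n i) 1, ⟨_, ⟨m', hsum', rfl⟩, rfl⟩,
        monomial (Wwin n i0) 1, ⟨Wwin n i0, ⟨i0, rfl⟩, rfl⟩, ?_⟩
      show _ = (fun s => monomial s (1:K)) E
      rw [monomial_mul, one_mul, ← hEeq]

lemma monomial_mem_pow [NeZero n] (hn : 4 ≤ n) {t : ℕ} (ξ : ZMod n →₀ ℕ) (m : ZMod n → ℕ)
    (hsum : ∑ i, m i = t) (hcon : ∀ v, t ≤ m (v+1) + m (v+2) + ξ v) :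
    monomial ξ (1:K) ∈ (cyclePathIdeal K n (n-2)) ^ t := by
  rw [pow_eq_span hn]
  set E : ZMod n →₀ ℕ := ∑ i, m i • Wwin n i with hEdef
  have hEξ : ∀ v, E v + (m (v+1) + m (v+2)) = t := by
    intro v; rw [hEdef, sum_smul_Wwin_apply hn m v, hsum]
  have hxi : ξ = (ξ - E) + E := by
    ext v
    have h1 := hEξ v
    have h2 := hcon v
    simp only [Finsupp.add_apply, Finsupp.tsub_apply]
    omega
  have hmem : monomial E (1:K) ∈ Ideal.span ((fun s => monomial s (1:K)) ''
      {E | ∃ m : ZMod n → ℕ, (∑ i, m i) = t ∧ E = ∑ i, m i • Wwin n i}) :=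
    Ideal.subset_span ⟨E, ⟨m, hsum, hEdef⟩, rfl⟩
  have : monomial ξ (1:K) = monomial (ξ - E) 1 * monomial E 1 := by
    rw [monomial_mul, one_mul, ← hxi]
  rw [this]
  exact Ideal.mul_mem_left _ _ hmem

lemma exists_cert_of_mem [NeZero n] (hn : 4 ≤ n) {t : ℕ} {p : MvPolynomial (ZMod n) K}
    (hp : p ∈ (cyclePathIdeal K n (n-2)) ^ t) {ξ : ZMod n →₀ ℕ} (hξ : ξ ∈ p.support) :
    ∃ m : ZMod n → ℕ, (∑ i, m i) = t ∧ ∀ v, t ≤ m (v+1) + m (v+2) + ξ v := by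
  rw [pow_eq_span hn] at hp
  obtain ⟨E, ⟨m, hsum, hE⟩, hle⟩ := mem_ideal_span_monomial_image.mp hp ξ hξ
  refine ⟨m, hsum, fun v => ?_⟩
  have h1 : E v + (m (v+1) + m (v+2)) = t := by rw [hE, sum_smul_Wwin_apply hn m v, hsum]
  have h2 : E v ≤ ξ v := hle v
  omega

/-! ### Parity -/

def par (h2 : 2 ∣ n) : ZMod n →+* ZMod 2 := ZMod.castHom h2 (ZMod 2)

lemma par_not_eq_iff : ∀ x y : ZMod 2, ¬ x = y ↔ x = y + 1 := by decide

lemma card_par_fiber [NeZero n] (h2 : 2 ∣ n) (ε : ZMod 2) :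
    (Finset.univ.filter (fun v : ZMod n => par h2 v = ε)).card = n / 2 := by
  have hshift : ∀ δ : ZMod 2,
      (Finset.univ.filter (fun v : ZMod n => par h2 v = δ)).card
        = (Finset.univ.filter (fun v : ZMod n => par h2 v = δ + 1)).card := by
    intro δ
    refine Finset.card_nbij' (fun v => v + 1) (fun v => v - 1) ?_ ?_ ?_ ?_ <;>
      intro a ha <;> simp only [Finset.mem_coe, Finset.mem_filter, Finset.mem_univ,
        true_and, map_add, map_sub, map_one] at ha ⊢
    · rw [ha]
    · rw [ha]; ring
    · ring
    · ring
  have hsplit : (Finset.univ.filter (fun v : ZMod n => par h2 v = 0)).card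
      + (Finset.univ.filter (fun v : ZMod n => par h2 v = 1)).card = n := by
    have h1 : (Finset.univ.filter (fun v : ZMod n => ¬ par h2 v = 0)).card
        = (Finset.univ.filter (fun v : ZMod n => par h2 v = 1)).card := by
      congr 1
      apply Finset.filter_congr
      intro v _
      rw [par_not_eq_iff]
      simp
    rw [← h1, Finset.card_filter_add_card_filter_not, Finset.card_univ, ZMod.card]
  have h01 := hshift 0
  have h10 := hshift 1
  rw [show (0 + 1 : ZMod 2) = 1 from rfl] at h01
  have hε : ε = 0 ∨ ε = 1 := by revert ε; decide
  have hd : 2 ∣ n := h2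
  obtain ⟨q, rfl⟩ := hd
  rcases hε with rfl | rfl <;> omega

lemma sum_par_shift [NeZero n] (h2 : 2 ∣ n) (m : ZMod n → ℕ) (ε : ZMod 2) (a : ZMod n) :
    ∑ v ∈ Finset.univ.filter (fun v : ZMod n => par h2 v = ε), m (v + a)
      = ∑ v ∈ Finset.univ.filter (fun v : ZMod n => par h2 v = ε + par h2 a), m v := by
  refine Finset.sum_nbij' (fun v => v + a) (fun v => v - a) ?_ ?_ ?_ ?_ ?_ <;>
    intro v hv <;> simp only [Finset.mem_filter, Finset.mem_univ, true_and,
      map_add, map_sub] at hv ⊢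
  · rw [hv]
  · rw [hv]; ring
  · ring
  · ring

lemma sum_pair_filter [NeZero n] (h2 : 2 ∣ n) (m : ZMod n → ℕ) (ε : ZMod 2) :
    ∑ v ∈ Finset.univ.filter (fun v : ZMod n => par h2 v = ε), (m (v + 1) + m (v + 2))
      = ∑ v, m v := by
  rw [Finset.sum_add_distrib, sum_par_shift h2 m ε 1, sum_par_shift h2 m ε 2]
  have hp1 : par h2 (1 : ZMod n) = 1 := map_one _
  have hp2 : par h2 (2 : ZMod n) = 0 := by
    have : (2 : ZMod n) = ((2 : ℕ) : ZMod n) := by push_cast; rfl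
    rw [this, map_natCast]
    decide
  rw [hp1, hp2, add_zero]
  have hsplit := Finset.sum_filter_add_sum_filter_not Finset.univ
    (fun v : ZMod n => par h2 v = ε + 1) m
  have hcongr : Finset.univ.filter (fun v : ZMod n => ¬ par h2 v = ε + 1)
      = Finset.univ.filter (fun v : ZMod n => par h2 v = ε) := by
    apply Finset.filter_congr
    intro v _
    exact (by decide : ∀ x e : ZMod 2, (¬ x = e + 1) ↔ x = e) _ ε
  rw [hcongr] at hsplit
  rw [hsplit]

/-! ### The exponent vector of the witness monomial and non-membership -/

def cexp (n t : ℕ) : ZMod n → ℕ := fun v => if v = 0 ∨ v = 1 then n/2 - 2 else t - 1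

lemma zero_ne_one' (hn : 4 ≤ n) : (0 : ZMod n) ≠ 1 := by
  haveI : NeZero n := ⟨by omega⟩
  intro h
  have := (val_eq_iff hn (show (1:ℕ) < n by omega)).mp (by push_cast; exact h)
  simp [ZMod.val_zero] at this

lemma par_zero_ne_par_one (h2 : 2 ∣ n) : par h2 (0 : ZMod n) ≠ par h2 (1 : ZMod n) := by
  rw [map_zero, map_one]; decide

lemma nonlin (x y : ℕ) : ¬ ((x+2)*(y+1) ≤ (y+1) + (x + (x+1)*y)) := by
  intro key
  rw [show (x+2)*(y+1) = x*y + (x + 2*y + 2) from by ring,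
    show (x+1)*y = x*y + y from by ring] at key
  omega

lemma no_cert [NeZero n] (hn : 4 ≤ n) (h2 : 2 ∣ n) {t : ℕ} (ht : n - 1 ≤ t) (a : ZMod n)
    (ha : a = 0 ∨ a = 1) (m : ZMod n → ℕ) (hsum : ∑ i, m i = t) :
    ¬ ∀ v, t ≤ m (v+1) + m (v+2) + (cexp n t v + if v = a then 1 else 0) := by
  intro hcon
  set ε : ZMod 2 := 1 - par h2 a with hε
  set F := Finset.univ.filter (fun v : ZMod n => par h2 v = ε) with hF
  have hmemF : ∀ v : ZMod n, v ∈ F ↔ par h2 v = ε := by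
    intro v; rw [hF, Finset.mem_filter]; simp
  have hva : ∀ v ∈ F, v ≠ a := by
    intro v hv hva2
    have h' := (hmemF v).mp hv
    rw [hva2, hε] at h'
    exact (by decide : ∀ x : ZMod 2, ¬ x = 1 - x) _ h'
  have hcardF : F.card = n / 2 := by rw [hF]; exact card_par_fiber h2 ε
  have hbex : ∃ b : ZMod n, b ∈ F ∧
      (∀ v ∈ F, cexp n t v = if v = b then n/2 - 2 else t - 1) := by
    rcases ha with rfl | rfl
    · refine ⟨1, ?_, ?_⟩
      · rw [hmemF, map_one, hε, map_zero]; decide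
      · intro v hv
        have hv0 : v ≠ 0 := by
          intro h0
          have h' := (hmemF v).mp hv
          rw [h0, map_zero, hε, map_zero] at h'
          exact (by decide : ¬ (0 : ZMod 2) = 1 - 0) h'
        rw [cexp]
        by_cases hv1 : v = 1
        · rw [if_pos (Or.inr hv1), if_pos hv1]
        · rw [if_neg (by tauto), if_neg hv1]
    · refine ⟨0, ?_, ?_⟩
      · rw [hmemF, map_zero, hε, map_one]; decide
      · intro v hv
        have hv1 : v ≠ 1 := by
          intro h0
          have h' := (hmemF v).mp hv
          rw [h0, map_one, hε, map_one] at h'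
          exact (by decide : ¬ (1 : ZMod 2) = 1 - 1) h'
        rw [cexp]
        by_cases hv0 : v = 0
        · rw [if_pos (Or.inl hv0), if_pos hv0]
        · rw [if_neg (by tauto), if_neg hv0]
  obtain ⟨b, hbF, hcexpF⟩ := hbex
  have hsumc : ∑ v ∈ F, cexp n t v = (n/2 - 2) + (F.card - 1) * (t - 1) := by
    rw [← Finset.add_sum_erase F _ hbF, hcexpF b hbF, if_pos rfl]
    congr 1
    have hconst : ∀ v ∈ F.erase b, cexp n t v = t - 1 := fun v hv => by
      rw [hcexpF v (Finset.mem_of_mem_erase hv), if_neg (Finset.ne_of_mem_erase hv)]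
    rw [Finset.sum_congr rfl hconst, Finset.sum_const, Finset.card_erase_of_mem hbF,
      smul_eq_mul]
  have hmain : F.card * t ≤ (∑ v ∈ F, (m (v+1) + m (v+2))) + ∑ v ∈ F, cexp n t v := by
    calc F.card * t = ∑ _v ∈ F, t := by rw [Finset.sum_const, smul_eq_mul]
    _ ≤ ∑ v ∈ F, ((m (v+1) + m (v+2)) + cexp n t v) := by
        apply Finset.sum_le_sum
        intro v hv
        have hc := hcon v
        rw [if_neg (hva v hv), add_zero] at hc
        omega
    _ = _ := Finset.sum_add_distrib
  rw [hsumc, hcardF, hF, sum_pair_filter h2 m ε, hsum] at hmain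
  obtain ⟨x, hx⟩ : ∃ x, n / 2 = x + 2 := ⟨n/2 - 2, by omega⟩
  obtain ⟨y, hy⟩ : ∃ y, t = y + 1 := ⟨t - 1, by omega⟩
  rw [hx, hy] at hmain
  have e1 : x + 2 - 2 = x := by omega
  have e2 : y + 1 - 1 = y := by omega
  have e3 : x + 2 - 1 = x + 1 := by omega
  rw [e1, e2, e3] at hmain
  exact nonlin x y hmain

/-! ### Construction of the covering certificate -/

lemma cert_pair [NeZero n] (hn : 4 ≤ n) (h2 : 2 ∣ n) {t : ℕ} (ht : n - 1 ≤ t) (i j : ZMod n)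
    (hi : par h2 i = 0) (hj : par h2 j = 1) :
    ∃ m : ZMod n → ℕ, (∑ v, m v) = t ∧
      ∀ v, t ≤ m (v+1) + m (v+2) +
        (cexp n t v + ((if v = i then 1 else 0) + (if v = j then 1 else 0))) := by
  have hij : i ≠ j := by
    intro h
    have : (1 : ZMod 2) = 0 := by rw [← hj, ← hi, h]
    exact absurd this (by decide)
  set LA := (j - i).val with hLA
  set LB := (i - j).val with hLB
  have hLAn : LA < n := ZMod.val_lt _
  have hLBn : LB < n := ZMod.val_lt _
  have hLA0 : LA ≠ 0 := by
    rw [hLA]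
    intro h
    exact (sub_ne_zero.mpr hij.symm) ((ZMod.val_eq_zero _).mp h)
  have hcastLA : ((LA : ℕ) : ZMod n) = j - i := by rw [hLA, ZMod.natCast_val, ZMod.cast_id]
  have hsumAB : LA + LB = n := by
    haveI : NeZero (j - i) := ⟨sub_ne_zero.mpr hij.symm⟩
    have hneg : LB = n - LA := by
      rw [hLB, hLA, show i - j = -(j - i) from by ring, ZMod.val_neg_of_ne_zero]
    omega
  have hLAodd : LA % 2 = 1 := by
    have hcast : ((LA : ℕ) : ZMod 2) = 1 := by
      have h1 : par h2 ((LA : ℕ) : ZMod n) = ((LA : ℕ) : ZMod 2) := map_natCast _ _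
      rw [hcastLA, map_sub, hj, hi, sub_zero] at h1
      exact h1.symm
    rw [← ZMod.natCast_mod LA 2] at hcast
    rcases Nat.mod_two_eq_zero_or_one LA with h | h
    · rw [h] at hcast; exact absurd hcast (by decide)
    · exact h
  have hLBodd : LB % 2 = 1 := by obtain ⟨q, hq⟩ := h2; omega
  set SA : Finset (ZMod n) :=
    (Finset.range ((LA-1)/2)).image (fun r => i + ((2*r+3 : ℕ) : ZMod n)) with hSA
  set SB : Finset (ZMod n) :=
    (Finset.range ((LB-1)/2)).image (fun r => j + ((2*r+3 : ℕ) : ZMod n)) with hSB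
  set S : Finset (ZMod n) := SA ∪ SB with hS
  have hScard : S.card ≤ n/2 - 1 := by
    have h1 : SA.card ≤ (LA-1)/2 :=
      le_trans Finset.card_image_le (le_of_eq (Finset.card_range _))
    have h1' : SB.card ≤ (LB-1)/2 :=
      le_trans Finset.card_image_le (le_of_eq (Finset.card_range _))
    have h3 := Finset.card_union_le SA SB
    rw [← hS] at h3
    obtain ⟨q, hq⟩ := h2
    omega
  have hcover : ∀ w : ZMod n, w ≠ i + 1 → w ≠ j + 1 → (w ∈ S ∨ w + 1 ∈ S) := by
    intro w hwi hwj
    set q := (w - (i+1)).val with hq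
    have hq0 : q ≠ 0 := by
      rw [hq]
      intro h
      exact hwi (sub_eq_zero.mp ((ZMod.val_eq_zero _).mp h))
    have hqn : q < n := ZMod.val_lt _
    have hcastq : ((q : ℕ) : ZMod n) = w - (i+1) := by rw [hq, ZMod.natCast_val, ZMod.cast_id]
    have hwq : w = i + 1 + ((q : ℕ) : ZMod n) := by rw [hcastq]; ring
    have hqLA : q ≠ LA := by
      intro h
      apply hwj
      have heq : ((q : ℕ) : ZMod n) = j - i := by rw [h, hcastLA]
      rw [hcastq] at heq
      linear_combination heq
    rcases lt_or_gt_of_ne hqLA with hlt | hgt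
    · rcases Nat.mod_two_eq_zero_or_one q with hpar | hpar
      · left
        rw [hS, Finset.mem_union]
        left
        rw [hSA, Finset.mem_image]
        refine ⟨(q-2)/2, Finset.mem_range.mpr (by omega), ?_⟩
        rw [show (2*((q-2)/2)+3 : ℕ) = q + 1 from by omega, hwq]
        push_cast
        ring
      · right
        rw [hS, Finset.mem_union]
        left
        rw [hSA, Finset.mem_image]
        refine ⟨(q-1)/2, Finset.mem_range.mpr (by omega), ?_⟩
        rw [show (2*((q-1)/2)+3 : ℕ) = q + 2 from by omega, hwq]
        push_cast
        ring
    · have hpn : q - LA ≤ LB - 1 := by omega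
      have hwq2 : w = j + 1 + ((q - LA : ℕ) : ZMod n) := by
        have hnat : ((q:ℕ) : ZMod n) = ((LA:ℕ) : ZMod n) + ((q - LA : ℕ) : ZMod n) := by
          rw [← Nat.cast_add]
          congr 1
          omega
        rw [hwq, hnat, hcastLA]
        ring
      set p := q - LA with hp
      have hp0 : p ≠ 0 := by omega
      rcases Nat.mod_two_eq_zero_or_one p with hpar | hpar
      · left
        rw [hS, Finset.mem_union]
        right
        rw [hSB, Finset.mem_image]
        refine ⟨(p-2)/2, Finset.mem_range.mpr (by omega), ?_⟩
        rw [show (2*((p-2)/2)+3 : ℕ) = p + 1 from by omega, hwq2]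
        push_cast
        ring
      · right
        rw [hS, Finset.mem_union]
        right
        rw [hSB, Finset.mem_image]
        refine ⟨(p-1)/2, Finset.mem_range.mpr (by omega), ?_⟩
        rw [show (2*((p-1)/2)+3 : ℕ) = p + 2 from by omega, hwq2]
        push_cast
        ring
  -- the certificate
  set m : ZMod n → ℕ :=
    fun v => (if v ∈ S then 1 else 0) + (if v = (2:ZMod n) then t - S.card else 0) with hm
  have hm1 : ∀ u : ZMod n, u ∈ S → 1 ≤ m u := by
    intro u hu
    have h1 : (if u ∈ S then 1 else 0 : ℕ) = 1 := if_pos hu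
    simp only [hm, h1]
    exact Nat.le_add_right _ _
  have hm2 : t - S.card ≤ m (2:ZMod n) := by
    simp only [hm, if_pos rfl]
    exact Nat.le_add_left _ _
  have hm12 : (2:ZMod n) ∈ S → 1 + (t - S.card) ≤ m (2:ZMod n) := by
    intro h
    simp only [hm, if_pos h, if_pos rfl]
    exact le_rfl
  have hi0 : i ≠ 1 := by
    intro h; rw [h, map_one] at hi; exact absurd hi (by decide)
  have hj0 : j ≠ 0 := by
    intro h; rw [h, map_zero] at hj; exact absurd hj (by decide)
  refine ⟨m, ?_, ?_⟩
  · have h1 : (∑ v : ZMod n, if v ∈ S then (1:ℕ) else 0) = S.card := by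
      rw [Finset.sum_ite_mem, Finset.univ_inter, Finset.sum_const, smul_eq_mul, mul_one]
    have h2' : (∑ v : ZMod n, if v = (2:ZMod n) then t - S.card else 0) = t - S.card := by
      rw [Finset.sum_ite_eq' Finset.univ (2:ZMod n) (fun _ => t - S.card), if_pos (Finset.mem_univ _)]
    simp only [hm]
    rw [Finset.sum_add_distrib, h1, h2']
    obtain ⟨q, hq⟩ := h2
    omega
  · intro v
    by_cases hv0 : v = 0
    · subst hv0
      rw [zero_add, zero_add, cexp, if_pos (Or.inl rfl), if_neg (Ne.symm hj0)]
      by_cases hvi : (0:ZMod n) = i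
      · rw [if_pos hvi]
        obtain ⟨q, hq⟩ := h2
        omega
      · rw [if_neg hvi]
        have hc := hcover 1 (fun h => hvi (by linear_combination h))
          (fun h => hj0 (by linear_combination -h))
        obtain ⟨q, hq⟩ := h2
        rcases hc with h | h
        · have := hm1 1 h
          omega
        · have := hm12 (by rwa [show (1:ZMod n)+1 = 2 from by ring] at h)
          omega
    · by_cases hv1 : v = 1
      · subst hv1
        rw [show (1:ZMod n)+1 = 2 from by ring, show (1:ZMod n)+2 = 2+1 from by ring,
          cexp, if_pos (Or.inr rfl), if_neg (fun h => hi0 h.symm)]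
        by_cases hvj : (1:ZMod n) = j
        · rw [if_pos hvj]
          obtain ⟨q, hq⟩ := h2
          omega
        · rw [if_neg hvj]
          have hc := hcover 2 (fun h => hi0 (by linear_combination -h))
            (fun h => hvj (by linear_combination h))
          obtain ⟨q, hq⟩ := h2
          rcases hc with h | h
          · have := hm12 h
            omega
          · have := hm1 _ h
            omega
      · rw [cexp, if_neg (by tauto)]
        by_cases hvi : v = i
        · rw [if_pos hvi, if_neg (fun h => hij (hvi.symm.trans h))]
          omega
        · by_cases hvj : v = j
          · rw [if_neg hvi, if_pos hvj]
            omega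
          · rw [if_neg hvi, if_neg hvj]
            have hc := hcover (v+1) (fun h => hvi (by linear_combination h))
              (fun h => hvj (by linear_combination h))
            rcases hc with h | h
            · have := hm1 _ h
              omega
            · have := hm1 _ (by rwa [show v+1+1 = v+2 from by ring] at h)
              omega

lemma ite_flip {α : Type*} [DecidableEq α] (x y : α) (c : ℕ) :
    (if x = y then c else 0) = if y = x then c else 0 := by
  by_cases h : x = y
  · rw [if_pos h, if_pos h.symm]
  · rw [if_neg h, if_neg (fun hh => h hh.symm)]

end DepthAux

open DepthAux in
/-- If `n ≥ 4` is even, then `depth(S/J_{n,n-2}^t) ≤ 1` for all `t ≥ n - 1`. -/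
theorem depth_le_one_even
    (K : Type*) [Field K] (n : ℕ) (hn : 4 ≤ n) (heven : Even n)
    (t : ℕ) (ht : n - 1 ≤ t) :
    quotDepth ((cyclePathIdeal K n (n - 2)) ^ t) ≤ 1 := by
  classical
  haveI : NeZero n := ⟨by omega⟩
  have h2 : (2 : ℕ) ∣ n := heven.two_dvd
  unfold quotDepth
  apply csSup_le'
  rintro k ⟨rs, hlen, hmem, hreg⟩
  by_contra hk
  push_neg at hk
  rcases rs with _ | ⟨r1, rs'⟩
  · simp at hlen; omega
  rcases rs' with _ | ⟨r2, rest⟩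
  · simp at hlen; omega
  have hwreg := hreg.toIsWeaklyRegular
  rw [RingTheory.Sequence.isWeaklyRegular_cons_iff] at hwreg
  obtain ⟨h1reg, hwreg2⟩ := hwreg
  rw [RingTheory.Sequence.isWeaklyRegular_cons_iff] at hwreg2
  obtain ⟨h2reg, -⟩ := hwreg2
  set I : Ideal (MvPolynomial (ZMod n) K) := (cyclePathIdeal K n (n - 2)) ^ t with hI
  set ζ : ZMod n →₀ ℕ := Finsupp.equivFunOnFinite.symm (cexp n t) with hζ
  have hζval : ∀ v, ζ v = cexp n t v := fun v => rfl
  set Z : MvPolynomial (ZMod n) K := monomial ζ 1 with hZdef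
  set w : ZMod n → (MvPolynomial (ZMod n) K ⧸ I) :=
    fun a => if par h2 a = 0 then Submodule.Quotient.mk (X a * Z) else 0 with hwdef
  have hpar01 : ∀ x : ZMod 2, x = 0 ∨ x = 1 := by decide
  have hmemIJ : ∀ a b : ZMod n, par h2 a = 0 → par h2 b = 1 → X b * (X a * Z) ∈ I := by
    intro a b hpa hpb
    obtain ⟨m, hsum, hcon⟩ := cert_pair hn h2 ht a b hpa hpb
    have heq : X b * (X a * Z) = monomial (Finsupp.single b 1 + (Finsupp.single a 1 + ζ)) 1 := by
      rw [hZdef, show (X b : MvPolynomial (ZMod n) K) = monomial (Finsupp.single b 1) 1 from rfl,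
        show (X a : MvPolynomial (ZMod n) K) = monomial (Finsupp.single a 1) 1 from rfl,
        monomial_mul, monomial_mul]
      norm_num
    rw [heq, hI]
    apply monomial_mem_pow hn (Finsupp.single b 1 + (Finsupp.single a 1 + ζ)) m hsum
    intro v
    have hval : ((Finsupp.single b 1 + (Finsupp.single a 1 + ζ) : ZMod n →₀ ℕ)) v
        = cexp n t v + ((if v = a then 1 else 0) + (if v = b then 1 else 0)) := by
      rw [Finsupp.add_apply, Finsupp.add_apply, Finsupp.single_apply, Finsupp.single_apply,
        hζval, ite_flip b v, ite_flip a v]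
      ring
    rw [hval]
    exact hcon v
  have hw0eq : ∀ a : ZMod n, par h2 a = 0 → w a = Submodule.Quotient.mk (X a * Z) := by
    intro a ha
    simp only [hwdef]
    rw [if_pos ha]
  have hw1eq : ∀ a : ZMod n, par h2 a = 1 → w a = 0 := by
    intro a ha
    simp only [hwdef]
    rw [if_neg (by rw [ha]; decide)]
  have hmksmul : ∀ (r p : MvPolynomial (ZMod n) K),
      r • (Submodule.Quotient.mk p : MvPolynomial (ZMod n) K ⧸ I) = Submodule.Quotient.mk (r * p) := by
    intro r p
    rw [← smul_eq_mul, Submodule.Quotient.mk_smul]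
  have hsymm : ∀ a b : ZMod n, par h2 a = 0 → par h2 b = 1 →
      (X a : MvPolynomial (ZMod n) K) • w b = (X b : MvPolynomial (ZMod n) K) • w a := by
    intro a b hpa hpb
    rw [hw1eq b hpb, hw0eq a hpa, smul_zero, hmksmul, eq_comm, Submodule.Quotient.mk_eq_zero]
    exact hmemIJ a b hpa hpb
  have hw : ∀ a b : ZMod n,
      (X a : MvPolynomial (ZMod n) K) • w b = (X b : MvPolynomial (ZMod n) K) • w a := by
    intro a b
    rcases hpar01 (par h2 a) with hpa | hpa <;> rcases hpar01 (par h2 b) with hpb | hpb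
    · rw [hw0eq a hpa, hw0eq b hpb, hmksmul, hmksmul,
        show X a * (X b * Z) = X b * (X a * Z) from by ring]
    · exact hsymm a b hpa hpb
    · exact (hsymm b a hpb hpa).symm
    · rw [hw1eq a hpa, hw1eq b hpb, smul_zero, smul_zero]
  obtain ⟨v, hv⟩ := key_lemma (M := MvPolynomial (ZMod n) K ⧸ I) X h1reg h2reg
    (hmem r1 (by simp)) (hmem r2 (by simp)) w hw
  obtain ⟨vr, rfl⟩ := Submodule.Quotient.mk_surjective I v
  have hp0 : par h2 (0 : ZMod n) = 0 := map_zero _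
  have hp1 : par h2 (1 : ZMod n) = 1 := map_one _
  have hkey0 : X 0 * Z - X 0 * vr ∈ I := by
    apply (Submodule.Quotient.eq I).mp
    calc Submodule.Quotient.mk (X 0 * Z) = w 0 := (hw0eq 0 hp0).symm
    _ = X 0 • Submodule.Quotient.mk vr := hv 0
    _ = Submodule.Quotient.mk (X 0 * vr) := hmksmul _ _
  have hkey1 : X 1 * vr ∈ I := by
    apply (Submodule.Quotient.mk_eq_zero I).mp
    calc Submodule.Quotient.mk (X 1 * vr) = X 1 • Submodule.Quotient.mk vr := (hmksmul _ _).symm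
    _ = w 1 := (hv 1).symm
    _ = 0 := hw1eq 1 hp1
  rw [hI] at hkey0 hkey1
  have hcoeff0 : coeff (Finsupp.single 0 1 + ζ) (X 0 * Z) = 1 := by
    rw [hZdef, coeff_X_mul, coeff_monomial, if_pos rfl]
  have hvr : coeff ζ vr = 1 := by
    by_contra hne
    have hsupp : (Finsupp.single 0 1 + ζ) ∈ (X 0 * Z - X 0 * vr).support := by
      rw [mem_support_iff, coeff_sub, hcoeff0, coeff_X_mul]
      intro h
      exact hne (sub_eq_zero.mp h).symm
    obtain ⟨m, hsum, hcon⟩ := exists_cert_of_mem hn hkey0 hsupp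
    refine no_cert hn h2 ht 0 (Or.inl rfl) m hsum ?_
    intro u
    have hval : ((Finsupp.single 0 1 + ζ : ZMod n →₀ ℕ)) u = cexp n t u + (if u = 0 then 1 else 0) := by
      rw [Finsupp.add_apply, Finsupp.single_apply, hζval, ite_flip (0 : ZMod n) u]
      ring
    rw [← hval]
    exact hcon u
  have hsupp1 : (Finsupp.single 1 1 + ζ) ∈ (X 1 * vr).support := by
    rw [mem_support_iff, coeff_X_mul, hvr]
    exact one_ne_zero
  obtain ⟨m, hsum, hcon⟩ := exists_cert_of_mem hn hkey1 hsupp1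
  refine no_cert hn h2 ht 1 (Or.inr rfl) m hsum ?_
  intro u
  have hval : ((Finsupp.single 1 1 + ζ : ZMod n →₀ ℕ)) u = cexp n t u + (if u = 1 then 1 else 0) := by
    rw [Finsupp.add_apply, Finsupp.single_apply, hζval, ite_flip (1 : ZMod n) u]
    ring
  rw [← hval]
  exact hcon u
end

section
/- Let n ≥ 4 and t ≥ 1 be integers. For every 0 ≤ j ≤ t one has the colon ideal equality (J_{n,n−1}^t : x_n^j) = J_{n,n−1}^{t−j} · (J_{n−1,n−2} S)^j, where J_{n−1,n−2} S denotes the extension to S of the (n−2)-path ideal of the cycle of length n−1 on the variables x_1,…,x_{n−1}. -/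
open MvPolynomial

/-- The `m'`-path ideal of the cycle graph of length `n'` on the variables
`x_0, …, x_{n'-1}`, viewed inside `K[x_0, …, x_{n-1}]`: generated by the `n'` monomials
`x_i x_{i+1} ⋯ x_{i+m'-1}`, indices taken modulo `n'`. -/
noncomputable def cyclePathIdealIn (K : Type*) [Field K] (n n' m' : ℕ) :
    Ideal (MvPolynomial (ZMod n) K) :=
  Ideal.span { p | ∃ i : ℕ, i < n' ∧
    p = ∏ j ∈ Finset.range m', X ((((i + j) % n' : ℕ)) : ZMod n) }

open Finset



lemma mod_left_inv (N i j : ℕ) (hN : 0 < N) (hj : j < N) :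
    ((i + j) % N + N - i % N) % N = j := by
  have hr : i % N < N := Nat.mod_lt _ hN
  have h1 : (i + j) % N = (i % N + j) % N := by
    conv_lhs => rw [Nat.add_mod, Nat.mod_eq_of_lt hj]
  rw [h1]
  rcases Nat.lt_or_ge (i % N + j) N with h | h
  · rw [Nat.mod_eq_of_lt h]
    have : i % N + j + N - i % N = j + N := by omega
    rw [this, Nat.add_mod_right, Nat.mod_eq_of_lt hj]
  · have h2 : (i % N + j) % N = i % N + j - N := by
      rw [Nat.mod_eq_sub_mod h, Nat.mod_eq_of_lt (by omega)]
    rw [h2]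
    have : i % N + j - N + N - i % N = j := by omega
    rw [this, Nat.mod_eq_of_lt hj]

lemma mod_right_inv (N i k : ℕ) (hN : 0 < N) (hk : k < N) :
    (i + (k + N - i % N) % N) % N = k := by
  have hr : i % N < N := Nat.mod_lt _ hN
  rw [Nat.add_mod i _ N, Nat.mod_mod_of_dvd _ dvd_rfl]
  rcases Nat.lt_or_ge k (i % N) with h | h
  · have h2 : (k + N - i % N) % N = k + N - i % N := Nat.mod_eq_of_lt (by omega)
    rw [h2]
    have : i % N + (k + N - i % N) = k + N := by omega
    rw [this, Nat.add_mod_right, Nat.mod_eq_of_lt hk]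
  · have h2 : (k + N - i % N) % N = k - i % N := by
      have h3 : k + N - i % N = (k - i % N) + N := by omega
      rw [h3, Nat.add_mod_right, Nat.mod_eq_of_lt (by omega)]
    rw [h2]
    have : i % N + (k - i % N) = k := by omega
    rw [this, Nat.mod_eq_of_lt hk]

lemma prod_mod_cycle {M : Type*} [CommMonoid M] (N : ℕ) (hN : 0 < N) (i : ℕ)
    (f : ℕ → M) : ∏ j ∈ Finset.range N, f ((i + j) % N) = ∏ m ∈ Finset.range N, f m := by
  refine Finset.prod_nbij' (fun j => (i + j) % N) (fun k => (k + N - i % N) % N)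
    ?_ ?_ ?_ ?_ ?_
  · intro a _; simp only [Finset.mem_range]; exact Nat.mod_lt _ hN
  · intro a _; simp only [Finset.mem_range]; exact Nat.mod_lt _ hN
  · intro a ha; simp only [Finset.mem_range] at ha; exact mod_left_inv N i a hN ha
  · intro a ha; simp only [Finset.mem_range] at ha; exact mod_right_inv N i a hN ha
  · intro a _; rfl

noncomputable section
set_option linter.unusedSectionVars false

def yv (n : ℕ) : ZMod n := ((n-1 : ℕ) : ZMod n)

variable {K : Type*} [Field K] {n : ℕ} [NeZero n]

abbrev tauv (n : ℕ) := {i : ZMod n // i ≠ yv n}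


def iot (K : Type*) [Field K] (n : ℕ) :
    MvPolynomial (tauv n) K →+* MvPolynomial (ZMod n) K :=
  (rename Subtype.val).toRingHom

def IsExt (K : Type*) [Field K] (n : ℕ) (E : Ideal (MvPolynomial (ZMod n) K)) : Prop :=
  ∃ I₀, E = Ideal.map (iot K n) I₀

lemma IsExt.mul {E F} (hE : IsExt K n E) (hF : IsExt K n F) : IsExt K n (E * F) := by
  obtain ⟨I₀, rfl⟩ := hE; obtain ⟨J₀, rfl⟩ := hF
  exact ⟨I₀ * J₀, (Ideal.map_mul _ _ _).symm⟩

lemma IsExt.pow {E} (hE : IsExt K n E) (s : ℕ) : IsExt K n (E ^ s) := by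
  induction s with
  | zero => exact ⟨1, by simp [Ideal.map_top]⟩
  | succ k ih => rw [pow_succ]; exact ih.mul hE

lemma IsExt.span {G : Set (MvPolynomial (ZMod n) K)} (hG : G ⊆ Set.range (iot K n)) :
    IsExt K n (Ideal.span G) :=
  ⟨Ideal.span ((iot K n) ⁻¹' G), by
    rw [Ideal.map_span, Set.image_preimage_eq_of_subset hG]⟩

/-- The key regularity lemma: `X (yv n)` is a nonzerodivisor modulo an extended ideal. -/
lemma IsExt.colon_mem {E : Ideal (MvPolynomial (ZMod n) K)} (hE : IsExt K n E)
    {r : MvPolynomial (ZMod n) K} (h : r * X (yv n) ∈ E) : r ∈ E := by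
  obtain ⟨I₀, rfl⟩ := hE
  let e : Option (tauv n) ≃ ZMod n := Equiv.optionSubtypeNe (yv n)
  let ψ : MvPolynomial (ZMod n) K ≃ₐ[K] Polynomial (MvPolynomial (tauv n) K) :=
    (renameEquiv K e.symm).trans (optionEquivLeft K (tauv n))
  have hψy : ψ (X (yv n)) = Polynomial.X := by
    show (optionEquivLeft K (tauv n)) ((renameEquiv K e.symm) (X (yv n))) = _
    rw [renameEquiv_apply, rename_X]
    have : e.symm (yv n) = none := Equiv.optionSubtypeNe_symm_self (yv n)
    rw [this, optionEquivLeft_X_none]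
  have hψι : ∀ p, ψ (iot K n p) = Polynomial.C p := by
    have key : (ψ.toAlgHom.comp (rename Subtype.val) :
        MvPolynomial (tauv n) K →ₐ[K] Polynomial (MvPolynomial (tauv n) K))
        = Polynomial.CAlgHom := by
      apply MvPolynomial.algHom_ext
      intro i
      simp only [AlgHom.comp_apply, rename_X]
      show (optionEquivLeft K (tauv n)) ((renameEquiv K e.symm) (X i.val)) = _
      rw [renameEquiv_apply, rename_X]
      have : e.symm i.val = some i := Equiv.optionSubtypeNe_symm_of_ne i.2
      rw [this, optionEquivLeft_X_some]
      rfl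
    intro p
    exact DFunLike.congr_fun key p
  have hψιR : (ψ.toAlgHom.toRingHom).comp (iot K n) =
      (Polynomial.C : MvPolynomial (tauv n) K →+* _) :=
    RingHom.ext fun p => hψι p
  have hmem : ∀ q, q ∈ Ideal.map (iot K n) I₀ ↔
      ψ q ∈ Ideal.map (Polynomial.C : MvPolynomial (tauv n) K →+* _) I₀ := by
    intro q
    have hmap : Ideal.map (ψ.toAlgHom.toRingHom)
        (Ideal.map (iot K n) I₀)
        = Ideal.map (Polynomial.C : MvPolynomial (tauv n) K →+* _) I₀ := by
      rw [Ideal.map_map, hψιR]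
    constructor
    · intro hq
      rw [← hmap]
      exact Ideal.mem_map_of_mem _ hq
    · intro hq
      have h2 := Ideal.mem_map_of_mem (ψ.symm.toAlgHom.toRingHom) hq
      rw [← hmap, Ideal.map_map] at h2
      have h3 : (ψ.symm.toAlgHom.toRingHom).comp (ψ.toAlgHom.toRingHom)
          = RingHom.id _ :=
        RingHom.ext fun z => ψ.symm_apply_apply z
      rw [h3, Ideal.map_id] at h2
      simpa using h2
  rw [hmem] at h ⊢
  rw [map_mul, hψy] at h
  rw [Ideal.mem_map_C_iff] at h ⊢
  intro d
  have := h (d + 1)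
  rwa [Polynomial.coeff_mul_X] at this


variable (K n) in
def gg (c : ZMod n) : MvPolynomial (ZMod n) K := ∏ k ∈ Finset.univ.erase c, X k
variable (n) in
def TT : Finset (ZMod n) := (Finset.range (n-1)).image (Nat.cast)
variable (K n) in
def QQ : MvPolynomial (ZMod n) K := ∏ k ∈ TT n, X k
variable (K n) in
def ll (c : ZMod n) : MvPolynomial (ZMod n) K := ∏ k ∈ (TT n).erase c, X k
variable (K n) in
def JJ : Ideal (MvPolynomial (ZMod n) K) := Ideal.span (Set.range (gg K n))
variable (K n) in
def LL : Ideal (MvPolynomial (ZMod n) K) := Ideal.span ((ll K n) '' (TT n : Set (ZMod n)))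
variable (K n) in
def AA : Ideal (MvPolynomial (ZMod n) K) := Ideal.span {QQ K n}

lemma T_eq (hn : 1 ≤ n) : TT n = Finset.univ.erase (yv n) := by
  ext c
  simp only [TT, mem_image, mem_range, mem_erase, mem_univ, and_true]
  constructor
  · rintro ⟨m, hm, rfl⟩
    intro h
    have : (m : ZMod n).val = (yv n).val := by rw [h]
    rw [ZMod.val_natCast_of_lt (by omega)] at this
    rw [yv, ZMod.val_natCast_of_lt (by omega)] at this
    omega
  · intro hc
    refine ⟨(c : ZMod n).val, ?_, by simp [ZMod.natCast_val, ZMod.cast_id]⟩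
    have h1 : c.val < n := ZMod.val_lt c
    rcases Nat.lt_or_ge c.val (n-1) with h | h
    · exact h
    · exfalso; apply hc
      have : c.val = n - 1 := by omega
      rw [yv, ← this, ZMod.natCast_val, ZMod.cast_id]

lemma prod_cycle (i : ZMod n) :
    ∏ j ∈ Finset.range n, (X (i + (j : ZMod n)) : MvPolynomial (ZMod n) K)
      = ∏ k : ZMod n, X k := by
  refine Finset.prod_nbij' (fun j => i + (j : ZMod n)) (fun k => (k - i).val)
    ?_ ?_ ?_ ?_ ?_
  · intro a ha; exact Finset.mem_univ _
  · intro a _; simp [Finset.mem_range, ZMod.val_lt]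
  · intro a ha
    simp only [Finset.mem_range] at ha
    show (i + (a : ZMod n) - i).val = a
    rw [add_sub_cancel_left, ZMod.val_natCast_of_lt ha]
  · intro a _
    show i + (((a - i).val : ℕ) : ZMod n) = a
    rw [ZMod.natCast_val, ZMod.cast_id]; ring
  · intro a _; rfl

lemma gg_mul_X (c : ZMod n) : gg K n c * X c = ∏ k : ZMod n, X k :=
  Finset.prod_erase_mul _ _ (Finset.mem_univ c)

lemma ll_mul_X {c : ZMod n} (hc : c ∈ TT n) : ll K n c * X c = QQ K n :=
  Finset.prod_erase_mul _ _ hc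

lemma J_desc (hn : 1 ≤ n) : cyclePathIdeal K n (n - 1) = JJ K n := by
  have key : ∀ i : ZMod n,
      ∏ j ∈ Finset.range (n-1), (X (i + (j : ZMod n)) : MvPolynomial (ZMod n) K)
        = gg K n (i + ((n-1 : ℕ) : ZMod n)) := by
    intro i
    have h1 := prod_cycle (K := K) i
    have hn1 : n - 1 + 1 = n := by omega
    rw [show Finset.range n = Finset.range ((n-1)+1) from by rw [hn1],
      Finset.prod_range_succ] at h1
    rw [← gg_mul_X (K := K) (i + ((n-1 : ℕ) : ZMod n))] at h1
    exact mul_right_cancel₀ (X_ne_zero _) h1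
  unfold cyclePathIdeal JJ
  congr 1
  ext p
  constructor
  · rintro ⟨i, rfl⟩
    exact ⟨i + ((n-1 : ℕ) : ZMod n), (key i).symm⟩
  · rintro ⟨c, rfl⟩
    refine ⟨c - ((n-1 : ℕ) : ZMod n), ?_⟩
    rw [key]
    congr 1
    ring

lemma prodT : ∏ m ∈ Finset.range (n-1), (X ((m : ZMod n)) : MvPolynomial (ZMod n) K)
    = QQ K n := by
  rw [QQ, TT, Finset.prod_image]
  intro a ha b hb hab
  simp only [Finset.coe_range, Set.mem_Iio] at ha hb
  have : (a : ZMod n).val = (b : ZMod n).val := by rw [hab]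
  rwa [ZMod.val_natCast_of_lt (by omega), ZMod.val_natCast_of_lt (by omega)] at this

lemma L_desc (hn : 4 ≤ n) : cyclePathIdealIn K n (n-1) (n-2) = LL K n := by
  have hN : 0 < n - 1 := by omega
  have key : ∀ i : ℕ,
      ∏ j ∈ Finset.range (n-2), (X ((((i + j) % (n-1) : ℕ)) : ZMod n) : MvPolynomial (ZMod n) K)
        = ll K n (((i + (n-2)) % (n-1) : ℕ) : ZMod n) := by
    intro i
    have h1 : ∏ j ∈ Finset.range (n-1),
        (X ((((i + j) % (n-1) : ℕ)) : ZMod n) : MvPolynomial (ZMod n) K) = QQ K n := by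
      rw [prod_mod_cycle (n-1) hN i (fun m => X ((m : ZMod n)))]
      exact prodT
    rw [show Finset.range (n-1) = Finset.range ((n-2)+1) from by congr 1; omega,
      Finset.prod_range_succ] at h1
    have hc : ((((i + (n-2)) % (n-1) : ℕ)) : ZMod n) ∈ TT n := by
      rw [TT]
      exact Finset.mem_image_of_mem _ (Finset.mem_range.2 (Nat.mod_lt _ hN))
    rw [← ll_mul_X (K := K) hc] at h1
    exact mul_right_cancel₀ (X_ne_zero _) h1
  unfold cyclePathIdealIn LL
  congr 1
  ext p
  constructor
  · rintro ⟨i, hi, rfl⟩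
    rw [key i]
    refine Set.mem_image_of_mem _ ?_
    rw [TT]
    exact Finset.mem_image_of_mem _ (Finset.mem_range.2 (Nat.mod_lt _ hN))
  · rintro ⟨c, hc, rfl⟩
    simp only [TT, Finset.coe_image, Set.mem_image, Finset.mem_coe, Finset.mem_range] at hc
    obtain ⟨m, hm, rfl⟩ := hc
    refine ⟨(m+1) % (n-1), Nat.mod_lt _ hN, ?_⟩
    rw [key]
    congr 2
    rw [Nat.mod_add_mod]
    have : m + 1 + (n-2) = m + (n-1) := by omega
    rw [this, Nat.add_mod_right, Nat.mod_eq_of_lt hm]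

lemma gg_yv (hn : 1 ≤ n) : gg K n (yv n) = QQ K n := by
  rw [QQ, T_eq hn, gg]

lemma gg_of_ne {c : ZMod n} (hn : 1 ≤ n) (hc : c ≠ yv n) :
    gg K n c = X (yv n) * ll K n c := by
  rw [gg, ll, T_eq hn, Finset.erase_right_comm]
  exact (Finset.mul_prod_erase (Finset.univ.erase c)
    (X : ZMod n → MvPolynomial (ZMod n) K)
    (Finset.mem_erase.2 ⟨fun h => hc (h ▸ rfl), Finset.mem_univ _⟩)).symm

lemma Q_mem_LL (hn : 4 ≤ n) : QQ K n ∈ LL K n := by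
  have h0 : (0 : ZMod n) ∈ TT n := by
    rw [TT]
    refine Finset.mem_image.2 ⟨0, Finset.mem_range.2 (by omega), by simp⟩
  rw [← ll_mul_X (K := K) h0]
  exact Ideal.mul_mem_right _ _ (Ideal.subset_span (Set.mem_image_of_mem _ h0))

lemma A_le_L (hn : 4 ≤ n) : AA K n ≤ LL K n := by
  rw [AA, Ideal.span_le, Set.singleton_subset_iff]
  exact Q_mem_LL hn

lemma A_le_J (hn : 4 ≤ n) : AA K n ≤ JJ K n := by
  rw [AA, Ideal.span_le, Set.singleton_subset_iff]
  rw [← gg_yv (K := K) (by omega)]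
  exact Ideal.subset_span ⟨yv n, rfl⟩

lemma J_struct (hn : 4 ≤ n) :
    JJ K n = Ideal.span {X (yv n)} * LL K n + AA K n := by
  have hset : Set.range (gg K n)
      = (fun c => X (yv n) * ll K n c) '' (TT n : Set (ZMod n)) ∪ {QQ K n} := by
    ext p
    constructor
    · rintro ⟨c, rfl⟩
      by_cases hc : c = yv n
      · right; rw [hc, gg_yv (by omega)]; rfl
      · left
        refine ⟨c, ?_, (gg_of_ne (by omega) hc).symm⟩
        rw [T_eq (by omega)]
        exact Finset.mem_coe.2 (Finset.mem_erase.2 ⟨hc, Finset.mem_univ _⟩)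
    · rintro (⟨c, hc, rfl⟩ | hp)
      · have hcy : c ≠ yv n := by
          rw [T_eq (by omega)] at hc
          exact (Finset.mem_erase.1 (Finset.mem_coe.1 hc)).1
        exact ⟨c, gg_of_ne (by omega) hcy⟩
      · rw [Set.mem_singleton_iff] at hp
        rw [hp, ← gg_yv (by omega)]
        exact ⟨yv n, rfl⟩
  rw [JJ, hset, Ideal.span_union, Ideal.add_eq_sup]
  congr 1
  rw [LL, Ideal.span_mul_span', Set.singleton_mul, Set.image_image]

lemma X_ne_yv_mem_range {k : ZMod n} (hk : k ≠ yv n) :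
    (X k : MvPolynomial (ZMod n) K) ∈ Set.range (iot K n) :=
  ⟨X ⟨k, hk⟩, by simp [iot]⟩

lemma prod_X_mem_range {s : Finset (ZMod n)} (hs : ∀ k ∈ s, k ≠ yv n) :
    (∏ k ∈ s, X k : MvPolynomial (ZMod n) K) ∈ Set.range (iot K n) := by
  refine ⟨∏ k ∈ s.attach, X ⟨k.1, hs k.1 k.2⟩, ?_⟩
  rw [map_prod]
  have : ∀ k : {x // x ∈ s}, (iot K n) (X ⟨k.1, hs k.1 k.2⟩) = X k.1 := by
    intro k; simp [iot]
  rw [Finset.prod_congr rfl (fun k _ => this k)]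
  exact Finset.prod_attach s (fun k => X k)

lemma mem_TT_ne_yv (hn : 4 ≤ n) {k : ZMod n} (hk : k ∈ TT n) : k ≠ yv n := by
  rw [T_eq (by omega)] at hk
  exact (Finset.mem_erase.1 hk).1

lemma IsExt_AA (hn : 4 ≤ n) : IsExt K n (AA K n) := by
  apply IsExt.span
  rw [Set.singleton_subset_iff, QQ]
  exact prod_X_mem_range (fun k hk => mem_TT_ne_yv hn hk)

lemma IsExt_LL (hn : 4 ≤ n) : IsExt K n (LL K n) := by
  apply IsExt.span
  rintro p ⟨c, hc, rfl⟩
  rw [ll]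
  exact prod_X_mem_range (fun k hk => mem_TT_ne_yv hn (Finset.mem_of_mem_erase hk))

lemma bino {R : Type*} [CommRing R] (U V : Ideal R) (s : ℕ) :
    (U + V) ^ (s + 1) ≤ U * (U + V) ^ s + V ^ (s + 1) := by
  induction s with
  | zero =>
    rw [pow_one, pow_zero, mul_one, pow_one]
  | succ k ih =>
    have h1 : (U + V) ^ (k + 2) = (U + V) ^ (k + 1) * (U + V) := pow_succ _ _
    rw [h1]
    calc (U + V) ^ (k + 1) * (U + V)
        ≤ (U * (U + V) ^ k + V ^ (k + 1)) * (U + V) := Ideal.mul_mono_left ih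
      _ = U * (U + V) ^ (k + 1) + (V ^ (k + 1) * U + V ^ (k + 2)) := by ring
      _ ≤ U * (U + V) ^ (k + 1) + V ^ (k + 2) := by
          rw [Ideal.add_eq_sup, Ideal.add_eq_sup, Ideal.add_eq_sup]
          apply sup_le
          · exact le_sup_left
          · apply sup_le
            · refine le_sup_of_le_left ?_
              calc V ^ (k + 1) * U = U * V ^ (k + 1) := by ring
                _ ≤ U * (U + V) ^ (k + 1) :=
                    Ideal.mul_mono_right (Ideal.pow_right_mono (by
                      rw [Ideal.add_eq_sup]; exact le_sup_right) _)
            · exact le_sup_right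

lemma core_colon (hn : 4 ≤ n) (s i : ℕ) :
    ((JJ K n ^ (s+1) * LL K n ^ i).colon (Ideal.span {(X (yv n) : MvPolynomial (ZMod n) K)}))
      = JJ K n ^ s * LL K n ^ (i+1) := by
  have hJ : JJ K n = Ideal.span {X (yv n)} * LL K n + AA K n := J_struct hn
  apply le_antisymm
  · intro r hr
    rw [Ideal.mem_colon_span_singleton] at hr
    have hb : JJ K n ^ (s+1) ≤ (Ideal.span {X (yv n)} * LL K n) * JJ K n ^ s + AA K n ^ (s+1) := by
      have := bino (Ideal.span {X (yv n)} * LL K n) (AA K n) s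
      rwa [← hJ] at this
    have hb2 : JJ K n ^ (s+1) * LL K n ^ i
        ≤ Ideal.span {X (yv n)} * (JJ K n ^ s * LL K n ^ (i+1)) + AA K n ^ (s+1) * LL K n ^ i := by
      calc JJ K n ^ (s+1) * LL K n ^ i
          ≤ ((Ideal.span {X (yv n)} * LL K n) * JJ K n ^ s + AA K n ^ (s+1)) * LL K n ^ i :=
            Ideal.mul_mono_left hb
        _ = Ideal.span {X (yv n)} * (JJ K n ^ s * LL K n ^ (i+1)) + AA K n ^ (s+1) * LL K n ^ i := by
            ring
    have hmem := hb2 hr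
    rw [Ideal.add_eq_sup] at hmem
    obtain ⟨p, hp, q, hq, hpq⟩ := Submodule.mem_sup.1 hmem
    rw [Ideal.mem_span_singleton_mul] at hp
    obtain ⟨z, hz, rfl⟩ := hp
    have he : (r - z) * X (yv n) ∈ AA K n ^ (s+1) * LL K n ^ i := by
      have heq : (r - z) * X (yv n) = r * X (yv n) - X (yv n) * z := by ring
      rw [heq, ← hpq]
      simpa using hq
    have hExt : IsExt K n (AA K n ^ (s+1) * LL K n ^ i) :=
      ((IsExt_AA hn).pow _).mul ((IsExt_LL hn).pow _)
    have hrz := hExt.colon_mem he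
    have hEG : AA K n ^ (s+1) * LL K n ^ i ≤ JJ K n ^ s * LL K n ^ (i+1) := by
      calc AA K n ^ (s+1) * LL K n ^ i = (AA K n ^ s * LL K n ^ i) * AA K n := by
            rw [pow_succ]; ring
        _ ≤ (JJ K n ^ s * LL K n ^ i) * LL K n :=
            Ideal.mul_mono (Ideal.mul_mono_left (Ideal.pow_right_mono (A_le_J hn) _)) (A_le_L hn)
        _ = JJ K n ^ s * LL K n ^ (i+1) := by rw [pow_succ]; ring
    have hfin : r = z + (r - z) := by ring
    rw [hfin]
    exact add_mem hz (hEG hrz)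
  · intro r hr
    rw [Ideal.mem_colon_span_singleton]
    have h1 : r * X (yv n) ∈ (JJ K n ^ s * LL K n ^ (i+1)) * Ideal.span {X (yv n)} :=
      Ideal.mul_mem_mul hr (Ideal.subset_span rfl)
    have h2 : (JJ K n ^ s * LL K n ^ (i+1)) * Ideal.span {X (yv n)}
        ≤ JJ K n ^ (s+1) * LL K n ^ i := by
      calc (JJ K n ^ s * LL K n ^ (i+1)) * Ideal.span {X (yv n)}
          = (JJ K n ^ s * LL K n ^ i) * (Ideal.span {X (yv n)} * LL K n) := by
            rw [pow_succ]; ring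
        _ ≤ (JJ K n ^ s * LL K n ^ i) * JJ K n := by
            refine Ideal.mul_mono_right ?_
            rw [hJ, Ideal.add_eq_sup]
            exact le_sup_left
        _ = JJ K n ^ (s+1) * LL K n ^ i := by rw [pow_succ]; ring
    exact h2 h1


end

/-- For `n ≥ 4`, `t ≥ 1` and `0 ≤ j ≤ t`:
`(J_{n,n-1}^t : x_n^j) = J_{n,n-1}^{t-j} ⬝ (J_{n-1,n-2} S)^j`. -/
theorem colon_xn_pow_eq
    (K : Type*) [Field K] (n t : ℕ) (hn : 4 ≤ n) (ht : 1 ≤ t)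
    (j : ℕ) (hj : j ≤ t) :
    ((cyclePathIdeal K n (n - 1)) ^ t).colon
        (Ideal.span {((X (((n - 1 : ℕ) : ZMod n))) ^ j : MvPolynomial (ZMod n) K)}) =
      (cyclePathIdeal K n (n - 1)) ^ (t - j) * (cyclePathIdealIn K n (n - 1) (n - 2)) ^ j := by
  haveI : NeZero n := ⟨by omega⟩
  rw [J_desc (by omega : 1 ≤ n), L_desc hn]
  show ((JJ K n ^ t).colon (Ideal.span {(X (yv n) ^ j : MvPolynomial (ZMod n) K)})) = JJ K n ^ (t - j) * LL K n ^ j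
  induction j with
  | zero =>
    rw [Nat.sub_zero, pow_zero (LL K n), mul_one]
    ext r
    rw [pow_zero, Ideal.mem_colon_span_singleton, mul_one]
  | succ k ih =>
    have ihk := ih (by omega)
    have hsplit : (JJ K n ^ t).colon (Ideal.span {(X (yv n) ^ (k+1) : MvPolynomial (ZMod n) K)})
        = ((JJ K n ^ t).colon (Ideal.span {(X (yv n) ^ k : MvPolynomial (ZMod n) K)})).colon (Ideal.span {(X (yv n) : MvPolynomial (ZMod n) K)}) := by
      ext r
      simp only [Ideal.mem_colon_span_singleton]
      rw [pow_succ]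
      constructor
      · intro h
        have heq : r * X (yv n) * X (yv n) ^ k = r * (X (yv n) ^ k * X (yv n)) := by ring
        rwa [heq]
      · intro h
        have heq : r * (X (yv n) ^ k * X (yv n)) = r * X (yv n) * X (yv n) ^ k := by ring
        rwa [heq]
    rw [hsplit, ihk]
    have ht' : t - k = (t - (k+1)) + 1 := by omega
    rw [ht', core_colon hn (t - (k+1)) k]
end

section
/- Let m, t ≥ 2 be integers and n = mt − 1. Then the colon ideal L = (J_{n,m}^t : x_1 x_2 ⋯ x_{mt−1}) equals the maximal graded ideal (x_1, x_2, …, x_n). -/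
open MvPolynomial

private lemma prodRangeMul {M : Type*} [CommMonoid M] (f : ℕ → M) (m : ℕ) :
    ∀ t : ℕ, ∏ j ∈ Finset.range t, ∏ l ∈ Finset.range m, f (j * m + l)
      = ∏ k ∈ Finset.range (t * m), f k
  | 0 => by simp
  | (t + 1) => by
      rw [Finset.prod_range_succ, prodRangeMul f m t, Nat.succ_mul,
        Finset.prod_range_add]

private lemma prodMemPow {R : Type*} [CommRing R] (I : Ideal R) (a : ℕ → R) :
    ∀ t : ℕ, (∀ j < t, a j ∈ I) → ∏ j ∈ Finset.range t, a j ∈ I ^ t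
  | 0, _ => by simp [Ideal.one_eq_top]
  | (t + 1), h => by
      rw [Finset.prod_range_succ, pow_succ]
      exact Ideal.mul_mem_mul (prodMemPow I a t fun j hj => h j (by omega))
        (h t (by omega))

private lemma prodRangeZMod {M : Type*} [CommMonoid M] (n : ℕ) [NeZero n]
    (g : ZMod n → M) :
    ∏ k ∈ Finset.range n, g ((k : ℕ) : ZMod n) = ∏ z : ZMod n, g z := by
  refine Finset.prod_nbij' (fun k => ((k : ℕ) : ZMod n)) (fun z => z.val)
    (fun a _ => Finset.mem_univ _) (fun z _ => Finset.mem_range.2 (ZMod.val_lt z))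
    (fun a ha => ?_) (fun z _ => ?_) (fun a _ => rfl)
  · exact ZMod.val_cast_of_lt (Finset.mem_range.1 ha)
  · exact ZMod.natCast_rightInverse z

private lemma prodShiftZMod {M : Type*} [CommMonoid M] (n : ℕ) [NeZero n]
    (g : ZMod n → M) (i : ZMod n) :
    ∏ z : ZMod n, g (i + z) = ∏ z : ZMod n, g z :=
  Fintype.prod_equiv (Equiv.addLeft i) _ _ (fun z => rfl)

/-- For `m, t ≥ 2` and `n = mt - 1`, the colon ideal `(J_{n,m}^t : x_1 x_2 ⋯ x_{mt-1})`
equals the maximal graded ideal `(x_1, …, x_n)`. -/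
theorem colon_eq_maxIdeal_of_n_eq_mt_sub_one
    (K : Type*) [Field K] (n m t : ℕ) (hm : 2 ≤ m) (ht : 2 ≤ t) (hn : n = m * t - 1) :
    ((cyclePathIdeal K n m) ^ t).colon
        (Ideal.span {(∏ k ∈ Finset.range (m * t - 1), X ((k : ℕ) : ZMod n) :
          MvPolynomial (ZMod n) K)}) = maxIdeal K (ZMod n) := by
  have hm4 : 4 ≤ m * t := le_trans (by norm_num) (Nat.mul_le_mul hm ht)
  haveI : NeZero n := ⟨by omega⟩
  have hmt : m * t = n + 1 := by omega
  set u : MvPolynomial (ZMod n) K :=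
    ∏ k ∈ Finset.range (m * t - 1), X ((k : ℕ) : ZMod n) with hu
  have hun : u = ∏ z : ZMod n, X z := by
    rw [hu]
    have : m * t - 1 = n := by omega
    rw [this, prodRangeZMod]
  apply le_antisymm
  · -- colon ⊆ maximal ideal
    intro f hf
    rw [Ideal.mem_colon_span_singleton] at hf
    set ψ : MvPolynomial (ZMod n) K →ₐ[K] Polynomial (MvPolynomial (ZMod n) K) :=
      aeval (fun z => Polynomial.C (X z) * Polynomial.X) with hψ
    -- ψ maps J^t into (X^(m*t))
    have hmap : Ideal.map ψ (cyclePathIdeal K n m) ≤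
        Ideal.span {(Polynomial.X : Polynomial (MvPolynomial (ZMod n) K)) ^ m} := by
      rw [cyclePathIdeal, Ideal.map_span, Ideal.span_le]
      rintro _ ⟨p, ⟨i, rfl⟩, rfl⟩
      rw [SetLike.mem_coe, Ideal.mem_span_singleton, map_prod]
      simp only [hψ, aeval_X]
      rw [Finset.prod_mul_distrib, Finset.prod_const, Finset.card_range]
      exact dvd_mul_left _ _
    have hmem : ψ (f * u) ∈
        Ideal.span {(Polynomial.X : Polynomial (MvPolynomial (ZMod n) K)) ^ (m * t)} := by
      have h1 : ψ (f * u) ∈ Ideal.map ψ ((cyclePathIdeal K n m) ^ t) :=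
        Ideal.mem_map_of_mem _ hf
      rw [Ideal.map_pow] at h1
      have h2 := Ideal.pow_right_mono hmap t h1
      rwa [Ideal.span_singleton_pow, ← pow_mul] at h2
    rw [Ideal.mem_span_singleton] at hmem
    obtain ⟨h, hh⟩ := hmem
    -- compute ψ u
    have hψu : ψ u = Polynomial.C u * Polynomial.X ^ n := by
      have hn' : m * t - 1 = n := by omega
      rw [hu, map_prod]
      simp only [hψ, aeval_X]
      rw [Finset.prod_mul_distrib, Finset.prod_const, Finset.card_range, hn']
      congr 1
      exact (map_prod (Polynomial.C :
        MvPolynomial (ZMod n) K →+* Polynomial (MvPolynomial (ZMod n) K)) _ _).symm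
    -- constant coefficient of ψ f
    have hc0 : (ψ f).coeff 0 = C (constantCoeff f) := by
      have : (Polynomial.constantCoeff.comp ψ.toRingHom :
          MvPolynomial (ZMod n) K →+* MvPolynomial (ZMod n) K)
          = (C : K →+* MvPolynomial (ZMod n) K).comp constantCoeff := by
        apply MvPolynomial.ringHom_ext <;> intro x <;>
          simp [hψ, Polynomial.constantCoeff_apply]
      have := congrArg (fun φ => φ f) this
      simpa [Polynomial.constantCoeff_apply] using this
    -- coefficient of X^n of ψ (f * u) in two ways
    have key : C (constantCoeff f) * u = 0 := by
      have e1 : (ψ (f * u)).coeff n = C (constantCoeff f) * u := by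
        rw [map_mul, hψu, ← mul_assoc]
        have := Polynomial.coeff_mul_X_pow (ψ f * Polynomial.C u) n 0
        rw [zero_add] at this
        rw [this, Polynomial.coeff_mul_C, hc0]
      have e2 : (ψ (f * u)).coeff n = 0 := by
        rw [hh, mul_comm, Polynomial.coeff_mul_X_pow']
        have : ¬ (m * t ≤ n) := by omega
        simp [this]
      rw [← e1, e2]
    have hu0 : u ≠ 0 := by
      rw [hun]
      exact Finset.prod_ne_zero_iff.2 fun z _ => X_ne_zero z
    have hc : constantCoeff f = 0 := by
      rcases mul_eq_zero.1 key with h' | h'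
      · exact (map_eq_zero_iff C (C_injective _ _)).1 h'
      · exact absurd h' hu0
    -- conclude
    rw [maxIdeal, ← Set.image_univ]
    refine mem_ideal_span_X_image.2 fun d hd => ?_
    have hd0 : d ≠ 0 := by
      intro h0
      rw [mem_support_iff, h0] at hd
      exact hd (by simpa [MvPolynomial.constantCoeff_eq] using hc)
    obtain ⟨i, hi⟩ := Finsupp.ne_iff.1 hd0
    exact ⟨i, Set.mem_univ i, by simpa using hi⟩
  · -- maximal ideal ⊆ colon
    rw [maxIdeal, Ideal.span_le]
    rintro _ ⟨i, rfl⟩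
    rw [SetLike.mem_coe, Ideal.mem_colon_span_singleton]
    have key : X i * u = ∏ j ∈ Finset.range t,
        ∏ l ∈ Finset.range m, X (i + ((j * m + l : ℕ) : ZMod n)) := by
      rw [prodRangeMul (fun k => X (i + ((k : ℕ) : ZMod n))) m t]
      have htm : t * m = n + 1 := by rw [Nat.mul_comm]; omega
      rw [htm, Finset.prod_range_succ, ZMod.natCast_self, add_zero,
        prodRangeZMod n (fun z => X (i + z)), prodShiftZMod, ← hun, mul_comm]
    rw [key]
    refine prodMemPow _ _ t fun j _ => ?_
    refine Ideal.subset_span ⟨i + ((j * m : ℕ) : ZMod n), ?_⟩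
    refine Finset.prod_congr rfl fun l _ => ?_
    congr 1
    push_cast
    ring
end

section
/- Let m, t ≥ 2 be integers and mt < n ≤ m(t+1). Then the colon ideal L = (J_{n,m}^t : x_1 x_2 ⋯ x_{mt−1}) equals (x_m, x_{2m}, …, x_{mt}, x_n). -/
open MvPolynomial

namespace ColonAux
open Finset

lemma prod_X_eq {σ R ι : Type*} [CommSemiring R] (F : Finset ι) (g : ι → σ) :
    ∏ j ∈ F, (X (g j) : MvPolynomial σ R)
      = monomial (∑ j ∈ F, Finsupp.single (g j) 1) 1 := by
  classical
  induction F using Finset.cons_induction with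
  | empty => simp
  | cons a F ha ih =>
      rw [Finset.prod_cons, Finset.sum_cons, ih, X, monomial_mul, one_mul]

lemma sum_range_mul {M : Type*} [AddCommMonoid M] (f : ℕ → M) (a b : ℕ) :
    ∑ k ∈ range (a * b), f k = ∑ i ∈ range a, ∑ j ∈ range b, f (i * b + j) := by
  induction a with
  | zero => simp
  | succ a ih =>
      rw [Nat.succ_mul, Finset.sum_range_add, ih, Finset.sum_range_succ]

variable (n m t : ℕ)

/-- exponent of the path generator starting at `i` -/
noncomputable def gexp (i : ZMod n) : ZMod n →₀ ℕ :=
  ∑ j ∈ range m, Finsupp.single (i + (j : ZMod n)) 1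

/-- exponent of `u = x_0 ⋯ x_{mt-2}` -/
noncomputable def uexp : ZMod n →₀ ℕ :=
  ∑ j ∈ range (m * t - 1), Finsupp.single ((j : ZMod n)) 1

/-- sums of `t` generator exponents -/
def E : ℕ → Set (ZMod n →₀ ℕ)
  | 0 => {0}
  | k + 1 => Set.image2 (· + ·) (Set.range (gexp n m)) (E k)

lemma gen_set_eq (K : Type*) [Field K] :
    { p : MvPolynomial (ZMod n) K |
        ∃ i : ZMod n, p = ∏ j ∈ Finset.range m, X (i + (j : ZMod n)) }
      = (fun s => monomial s (1 : K)) '' Set.range (gexp n m) := by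
  ext p
  constructor
  · rintro ⟨i, rfl⟩
    exact ⟨gexp n m i, ⟨i, rfl⟩, by rw [gexp]; exact (prod_X_eq _ _).symm⟩
  · rintro ⟨s, ⟨i, rfl⟩, rfl⟩
    exact ⟨i, (prod_X_eq _ _).symm⟩

lemma pow_eq (K : Type*) [Field K] (k : ℕ) :
    (cyclePathIdeal K n m) ^ k
      = Ideal.span ((fun s => monomial s (1 : K)) '' E n m k) := by
  induction k with
  | zero =>
      simp only [pow_zero, E]
      rw [Set.image_singleton]
      simp [Ideal.span_singleton_one, monomial_zero']
  | succ k ih =>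
      rw [pow_succ, ih, cyclePathIdeal, gen_set_eq, mul_comm, Ideal.span_mul_span']
      congr 1
      show _ = (fun s => monomial s (1:K)) '' Set.image2 (· + ·) _ _
      rw [Set.image_image2, ← Set.image2_mul, Set.image2_image_left, Set.image2_image_right]
      apply Set.image2_congr
      intro a _ b _
      rw [monomial_mul, one_mul]


/-- the weight: total exponent on the distinguished variables -/
noncomputable def W (a : ZMod n →₀ ℕ) : ℕ :=
  (∑ k ∈ Finset.Icc 1 t, a ((k * m - 1 : ℕ) : ZMod n)) + a ((n - 1 : ℕ) : ZMod n)

lemma W_zero : W n m t 0 = 0 := by simp [W]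

lemma W_add (a b : ZMod n →₀ ℕ) : W n m t (a + b) = W n m t a + W n m t b := by
  simp only [W, Finsupp.add_apply, Finset.sum_add_distrib]; ring

lemma W_mono {a b : ZMod n →₀ ℕ} (h : a ≤ b) : W n m t a ≤ W n m t b := by
  have h' : ∀ x, a x ≤ b x := Finsupp.le_def.mp h
  exact Nat.add_le_add (Finset.sum_le_sum fun k _ => h' _) (h' _)

lemma W_sum {ι : Type*} (F : Finset ι) (f : ι → (ZMod n →₀ ℕ)) :
    W n m t (∑ i ∈ F, f i) = ∑ i ∈ F, W n m t (f i) := by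
  classical
  induction F using Finset.cons_induction with
  | empty => simp [W_zero]
  | cons a F ha ih => rw [Finset.sum_cons, Finset.sum_cons, W_add, ih]

lemma W_single_target {d : ZMod n}
    (hd : (∃ k : ℕ, 1 ≤ k ∧ k ≤ t ∧ d = ((k * m - 1 : ℕ) : ZMod n)) ∨
      d = ((n - 1 : ℕ) : ZMod n)) :
    1 ≤ W n m t (Finsupp.single d 1) := by
  rcases hd with ⟨k, hk1, hk2, rfl⟩ | rfl
  · refine le_trans ?_ (Nat.le_add_right _ _)
    calc (1:ℕ) = Finsupp.single ((k*m-1:ℕ) : ZMod n) 1 ((k*m-1:ℕ) : ZMod n) := by simp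
    _ ≤ _ := Finset.single_le_sum (f := fun k' => (Finsupp.single ((k*m-1:ℕ) : ZMod n) (1:ℕ)) ((k'*m-1:ℕ) : ZMod n)) (fun _ _ => Nat.zero_le _) (Finset.mem_Icc.mpr ⟨hk1, hk2⟩)
  · refine le_trans ?_ (Nat.le_add_left _ _)
    simp


lemma cast_inj_of_lt {a b : ℕ} (ha : a < n) (hb : b < n) :
    ((a : ZMod n) = (b : ZMod n)) ↔ a = b := by
  constructor
  · intro h
    have := congrArg ZMod.val h
    rwa [ZMod.val_cast_of_lt ha, ZMod.val_cast_of_lt hb] at this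
  · rintro rfl; rfl

lemma single_cast_apply {a b : ℕ} (ha : a < n) (hb : b < n) :
    (Finsupp.single ((a : ZMod n)) (1 : ℕ)) ((b : ZMod n)) = if a = b then 1 else 0 := by
  rw [Finsupp.single_apply]
  by_cases h : a = b
  · subst h; simp
  · rw [if_neg h, if_neg fun hc => h ((cast_inj_of_lt n ha hb).mp hc)]

lemma exists_hit (hm : 2 ≤ m) (ht : 2 ≤ t) (hn1 : m * t < n) (hn2 : n ≤ m * (t + 1))
    (i : ZMod n) :
    ∃ j ∈ range m,
      (∃ k : ℕ, 1 ≤ k ∧ k ≤ t ∧ i + (j : ZMod n) = ((k * m - 1 : ℕ) : ZMod n)) ∨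
        i + (j : ZMod n) = ((n - 1 : ℕ) : ZMod n) := by
  haveI : NeZero n := ⟨by omega⟩
  have hi₀ : i.val < n := ZMod.val_lt i
  have hi : i = ((i.val : ℕ) : ZMod n) := (ZMod.natCast_zmod_val i).symm
  set i₀ := i.val
  by_cases hcase : i₀ < m * t
  · obtain ⟨q, r, hr, hqr⟩ : ∃ q r, r < m ∧ m * q + r = i₀ :=
      ⟨i₀ / m, i₀ % m, Nat.mod_lt _ (by omega), Nat.div_add_mod i₀ m⟩
    have hq : q < t := by
      by_contra hq
      push_neg at hq
      have : m * t ≤ m * q := Nat.mul_le_mul_left m hq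
      omega
    have hmul : (q + 1) * m = m * q + m := by ring
    refine ⟨m - 1 - r, Finset.mem_range.mpr (by omega),
      Or.inl ⟨q + 1, by omega, by omega, ?_⟩⟩
    rw [hi, ← Nat.cast_add]
    congr 1
    omega
  · have hmul : m * (t + 1) = m * t + m := by ring
    refine ⟨n - 1 - i₀, Finset.mem_range.mpr (by omega), Or.inr ?_⟩
    rw [hi, ← Nat.cast_add]
    congr 1
    omega

lemma one_le_W_gexp (hm : 2 ≤ m) (ht : 2 ≤ t) (hn1 : m * t < n) (hn2 : n ≤ m * (t + 1))
    (i : ZMod n) : 1 ≤ W n m t (gexp n m i) := by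
  obtain ⟨j, hj, hhit⟩ := exists_hit n m t hm ht hn1 hn2 i
  rw [gexp, W_sum]
  calc 1 ≤ W n m t (Finsupp.single (i + (j : ZMod n)) 1) := W_single_target n m t hhit
  _ ≤ _ := Finset.single_le_sum (f := fun j : ℕ => W n m t (Finsupp.single (i + (j : ZMod n)) 1))
      (fun _ _ => Nat.zero_le _) hj

lemma le_W_of_mem_E (hm : 2 ≤ m) (ht : 2 ≤ t) (hn1 : m * t < n) (hn2 : n ≤ m * (t + 1)) :
    ∀ k, ∀ s ∈ E n m k, k ≤ W n m t s := by
  intro k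
  induction k with
  | zero => rintro s hs; exact Nat.zero_le _
  | succ k ih =>
      rintro s hs
      obtain ⟨x, ⟨i, rfl⟩, e, he, rfl⟩ := hs
      rw [W_add]
      have h1 := ih e he
      have h2 := one_le_W_gexp n m t hm ht hn1 hn2 i
      omega

lemma W_uexp (hm : 2 ≤ m) (ht : 2 ≤ t) (hn1 : m * t < n) :
    W n m t (uexp n m t) = t - 1 := by
  classical
  rw [uexp, W_sum]
  have e1 : ∀ j ∈ range (m * t - 1), W n m t (Finsupp.single ((j : ZMod n)) 1)
      = ∑ k ∈ Finset.Icc 1 t, (if j = k * m - 1 then 1 else 0) := by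
    intro j hj
    have hj' : j < m * t - 1 := Finset.mem_range.mp hj
    rw [W]
    have h2 : (Finsupp.single ((j : ZMod n)) (1:ℕ)) ((n - 1 : ℕ) : ZMod n) = 0 := by
      rw [single_cast_apply n (by omega) (by omega), if_neg (by omega)]
    rw [h2, Nat.add_zero]
    refine Finset.sum_congr rfl fun k hk => ?_
    obtain ⟨hk1, hk2⟩ := Finset.mem_Icc.mp hk
    have hkm : k * m ≤ m * t := by
      calc k * m ≤ t * m := Nat.mul_le_mul_right m hk2
      _ = m * t := Nat.mul_comm t m
    exact single_cast_apply n (by omega) (by omega)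
  rw [Finset.sum_congr rfl e1, Finset.sum_comm]
  have e2 : ∀ k ∈ Finset.Icc 1 t,
      (∑ j ∈ range (m * t - 1), if j = k * m - 1 then 1 else 0)
        = if k < t then 1 else 0 := by
    intro k hk
    obtain ⟨hk1, hk2⟩ := Finset.mem_Icc.mp hk
    rw [Finset.sum_ite_eq' (range (m * t - 1)) (k * m - 1) (fun _ => 1)]
    refine if_congr ?_ rfl rfl
    rw [Finset.mem_range]
    constructor
    · intro h
      by_contra hlt
      push_neg at hlt
      have : k = t := le_antisymm hk2 hlt
      subst this
      rw [Nat.mul_comm] at h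
      omega
    · intro h
      have h1 : k * m + m ≤ m * t := by
        calc k * m + m = (k + 1) * m := by ring
        _ ≤ t * m := Nat.mul_le_mul_right m (by omega)
        _ = m * t := Nat.mul_comm t m
      omega
  rw [Finset.sum_congr rfl e2]
  obtain ⟨s, rfl⟩ : ∃ s, t = s + 1 := ⟨t - 1, by omega⟩
  rw [Finset.sum_Icc_succ_top (by omega), if_neg (by omega)]
  have : ∀ k ∈ Finset.Icc 1 s, (if k < s + 1 then 1 else 0) = 1 := by
    intro k hk
    rw [if_pos]
    exact Nat.lt_succ_of_le (Finset.mem_Icc.mp hk).2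
  rw [Finset.sum_congr rfl this, Finset.sum_const, Nat.card_Icc]
  simp


noncomputable def Sng (a : ℕ) : ZMod n →₀ ℕ := Finsupp.single ((a : ZMod n)) 1

lemma uexp_eq : uexp n m t = ∑ j ∈ range (m * t - 1), Sng n j := rfl

lemma gexp_cast (s : ℕ) : gexp n m ((s : ZMod n)) = ∑ j ∈ range m, Sng n (s + j) := by
  rw [gexp]
  refine Finset.sum_congr rfl fun j _ => ?_
  rw [Sng, Nat.cast_add]

lemma sum_gexp (s r : ℕ) :
    ∑ i ∈ range r, gexp n m (((s + i * m : ℕ) : ZMod n))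
      = ∑ k ∈ range (r * m), Sng n (s + k) := by
  rw [sum_range_mul (fun k => Sng n (s + k)) r m]
  refine Finset.sum_congr rfl fun i _ => ?_
  rw [gexp_cast]
  refine Finset.sum_congr rfl fun j _ => ?_
  congr 1
  omega

lemma mem_E_sum (r : ℕ) (c : ℕ → ZMod n) :
    (∑ i ∈ range r, gexp n m (c i)) ∈ E n m r := by
  induction r generalizing c with
  | zero => simp [E]
  | succ r ih =>
      rw [Finset.sum_range_succ']
      exact ⟨gexp n m (c 0), ⟨c 0, rfl⟩, _, ih fun i => c (i + 1), by rw [add_comm]⟩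

lemma E_add {r s : ℕ} {a b : ZMod n →₀ ℕ} (ha : a ∈ E n m r) (hb : b ∈ E n m s) :
    a + b ∈ E n m (r + s) := by
  induction r generalizing a with
  | zero =>
      obtain rfl : a = 0 := ha
      simpa using hb
  | succ r ih =>
      obtain ⟨x, hx, e, he, rfl⟩ := ha
      have h4 : x + e + b = x + (e + b) := by abel
      rw [h4, show r + 1 + s = (r + s) + 1 from by omega]
      exact ⟨x, hx, e + b, ih he, rfl⟩

lemma case_top (hm : 2 ≤ m) (ht : 2 ≤ t) :
    Sng n (t * m - 1) + uexp n m t ∈ E n m t := by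
  have key : Sng n (t * m - 1) + uexp n m t
      = ∑ i ∈ range t, gexp n m (((0 + i * m : ℕ) : ZMod n)) := by
    rw [sum_gexp, uexp_eq]
    have h1 : t * m = (m * t - 1) + 1 := by
      have h2 : t * m = m * t := Nat.mul_comm t m
      have h3 : 2 * 2 ≤ m * t := Nat.mul_le_mul hm ht
      omega
    rw [h1, Finset.sum_range_succ, add_comm]
    congr 1
    · refine Finset.sum_congr rfl fun j _ => ?_
      congr 1
      omega
    · congr 1
      have h2 : t * m = m * t := Nat.mul_comm t m
      omega
  rw [key]
  exact mem_E_sum n m t _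

lemma case_mid (hm : 2 ≤ m) (ht : 2 ≤ t) {k : ℕ} (hk1 : 1 ≤ k) (hkt : k < t) :
    Sng n (k * m - 1) + uexp n m t ∈ E n m t := by
  have hmt : (t - k) * m + k * m = t * m := by
    rw [← Nat.add_mul]
    congr 1
    omega
  have hcomm : t * m = m * t := Nat.mul_comm t m
  have hkm1 : 1 * 1 ≤ k * m := Nat.mul_le_mul hk1 (by omega)
  have htkm : 1 * 1 ≤ (t - k) * m := Nat.mul_le_mul (by omega) (by omega)
  have hkmle : k * m + m ≤ m * t := by
    have : (k + 1) * m ≤ t * m := Nat.mul_le_mul_right m (by omega)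
    have h5 : (k + 1) * m = k * m + m := by ring
    omega
  have hA : (∑ j ∈ range (k * m), Sng n j) ∈ E n m k := by
    have := sum_gexp n m 0 k
    simp only [Nat.zero_add] at this
    rw [← this]
    exact mem_E_sum n m k _
  have hB : (∑ j ∈ range ((t - k) * m), Sng n (k * m - 1 + j)) ∈ E n m (t - k) := by
    rw [← sum_gexp]
    exact mem_E_sum n m (t - k) _
  have key : Sng n (k * m - 1) + uexp n m t
      = (∑ j ∈ range (k * m), Sng n j)
        + ∑ j ∈ range ((t - k) * m), Sng n (k * m - 1 + j) := by
    have hsplit : m * t - 1 = k * m + (m * t - 1 - k * m) := by omega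
    rw [uexp_eq, hsplit, Finset.sum_range_add]
    have hN : (t - k) * m = ((t - k) * m - 1) + 1 := by omega
    rw [hN, Finset.sum_range_succ']
    have e1 : ∀ j ∈ range ((t - k) * m - 1),
        Sng n (k * m - 1 + (j + 1)) = Sng n (k * m + j) := by
      intro j _
      congr 1
      omega
    rw [Finset.sum_congr rfl e1]
    have e2 : Sng n (k * m - 1 + 0) = Sng n (k * m - 1) := by congr 1
    rw [e2]
    have e3 : (t - k) * m - 1 = m * t - 1 - k * m := by omega
    rw [e3]
    abel
  rw [key]
  have := E_add n m hA hB
  rwa [show k + (t - k) = t by omega] at this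

lemma case_last (hm : 2 ≤ m) (ht : 2 ≤ t) (hn1 : m * t < n) :
    Sng n (n - 1) + uexp n m t ∈ E n m t := by
  have hcomm : t * m = m * t := Nat.mul_comm t m
  have h3 : 2 * 2 ≤ m * t := Nat.mul_le_mul hm ht
  have key : Sng n (n - 1) + uexp n m t
      = ∑ i ∈ range t, gexp n m (((n - 1 + i * m : ℕ) : ZMod n)) := by
    rw [sum_gexp, uexp_eq]
    have h1 : t * m = (t * m - 1) + 1 := by omega
    rw [h1, Finset.sum_range_succ']
    have e1 : ∀ j ∈ range (t * m - 1), Sng n (n - 1 + (j + 1)) = Sng n j := by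
      intro j _
      have : n - 1 + (j + 1) = n + j := by omega
      rw [this, Sng, Sng, Nat.cast_add, ZMod.natCast_self, zero_add]
    rw [Finset.sum_congr rfl e1]
    have e2 : Sng n (n - 1 + 0) = Sng n (n - 1) := by congr 1
    rw [e2, add_comm, show t * m - 1 = m * t - 1 from by omega]
  rw [key]
  exact mem_E_sum n m t _

end ColonAux

open ColonAux

/-- For `m, t ≥ 2` and `mt < n ≤ m(t+1)`, the colon ideal `(J_{n,m}^t : x_1 x_2 ⋯ x_{mt-1})`
equals `(x_m, x_{2m}, …, x_{mt}, x_n)`. -/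
theorem colon_eq_of_mt_lt_n_le
    (K : Type*) [Field K] (n m t : ℕ) (hm : 2 ≤ m) (ht : 2 ≤ t)
    (hn1 : m * t < n) (hn2 : n ≤ m * (t + 1)) :
    ((cyclePathIdeal K n m) ^ t).colon
        (Ideal.span {(∏ k ∈ Finset.range (m * t - 1), X ((k : ℕ) : ZMod n) :
          MvPolynomial (ZMod n) K)}) =
      Ideal.span { p : MvPolynomial (ZMod n) K |
        (∃ k : ℕ, 1 ≤ k ∧ k ≤ t ∧ p = X ((k * m - 1 : ℕ) : ZMod n)) ∨
          p = X ((n - 1 : ℕ) : ZMod n) } := by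
  classical
  set D : Set (ZMod n) := {d | (∃ k : ℕ, 1 ≤ k ∧ k ≤ t ∧ d = ((k * m - 1 : ℕ) : ZMod n)) ∨
    d = ((n - 1 : ℕ) : ZMod n)} with hD
  have hL : { p : MvPolynomial (ZMod n) K |
      (∃ k : ℕ, 1 ≤ k ∧ k ≤ t ∧ p = X ((k * m - 1 : ℕ) : ZMod n)) ∨
        p = X ((n - 1 : ℕ) : ZMod n) } = X '' D := by
    ext p
    constructor
    · rintro (⟨k, h1, h2, rfl⟩ | rfl)
      · exact ⟨_, Or.inl ⟨k, h1, h2, rfl⟩, rfl⟩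
      · exact ⟨_, Or.inr rfl, rfl⟩
    · rintro ⟨d, (⟨k, h1, h2, rfl⟩ | rfl), rfl⟩
      · exact Or.inl ⟨k, h1, h2, rfl⟩
      · exact Or.inr rfl
  have hu : (∏ k ∈ Finset.range (m * t - 1), X ((k : ℕ) : ZMod n) : MvPolynomial (ZMod n) K)
      = monomial (uexp n m t) 1 := by
    rw [uexp]
    exact prod_X_eq _ _
  rw [hL]
  apply le_antisymm
  · intro f hf
    rw [Ideal.mem_colon_span_singleton, hu, pow_eq, mem_ideal_span_monomial_image] at hf
    rw [mem_ideal_span_X_image]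
    intro a ha
    have hmem : a + uexp n m t ∈ (f * monomial (uexp n m t) (1 : K)).support := by
      rw [mem_support_iff, coeff_mul_monomial, mul_one]
      exact mem_support_iff.mp ha
    obtain ⟨si, hsi, hle⟩ := hf _ hmem
    have h1 : t ≤ W n m t si := le_W_of_mem_E n m t hm ht hn1 hn2 t si hsi
    have h2 : W n m t si ≤ W n m t a + (t - 1) := by
      calc W n m t si ≤ W n m t (a + uexp n m t) := W_mono n m t hle
      _ = _ := by rw [W_add, W_uexp n m t hm ht hn1]
    have h3 : 1 ≤ W n m t a := by omega
    rw [W] at h3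
    by_cases hlast : a ((n - 1 : ℕ) : ZMod n) ≠ 0
    · exact ⟨_, Or.inr rfl, hlast⟩
    · push_neg at hlast
      have hsum : (∑ k ∈ Finset.Icc 1 t, a ((k * m - 1 : ℕ) : ZMod n)) ≠ 0 := by omega
      obtain ⟨k, hk, hak⟩ := Finset.exists_ne_zero_of_sum_ne_zero hsum
      obtain ⟨hk1, hk2⟩ := Finset.mem_Icc.mp hk
      exact ⟨_, Or.inl ⟨k, hk1, hk2, rfl⟩, hak⟩
  · rw [Ideal.span_le]
    rintro p ⟨d, hd, rfl⟩
    rw [SetLike.mem_coe, Ideal.mem_colon_span_singleton, hu, pow_eq]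
    have hX : (X d : MvPolynomial (ZMod n) K) * monomial (uexp n m t) 1
        = monomial (Finsupp.single d 1 + uexp n m t) 1 := by
      rw [X, monomial_mul, one_mul]
    rw [hX]
    apply Ideal.subset_span
    refine ⟨_, ?_, rfl⟩
    rcases hd with ⟨k, hk1, hk2, rfl⟩ | rfl
    · by_cases hkt : k = t
      · have := case_top n m t hm ht
        rwa [Sng, show t * m - 1 = k * m - 1 from by rw [hkt]] at this
      · have := case_mid n m t hm ht hk1 (by omega)
        rwa [Sng] at this
    · have := case_last n m t hm ht hn1
      rwa [Sng] at this
end
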